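/- arXiv:math/0601174 — 5 statements merged into one kernel-verified Lean document; each statement's English description precedes it below -/
import Mathlib

section
/- Suppose the Markov kernel P satisfies PE(V, c, α, b, C). Then for every ξ ∈ (0,1] there exists b₁ ∈ (0,∞) such that P(V^ξ)(x) ≤ V(x)^ξ − cξ·V(x)^{α+ξ−1} + b₁·1_C(x) for all x ∈ 𝒳 (with the same set C appearing in the new drift condition). -/
open MeasureTheory ProbabilityTheory ENNReal Set

/-- Concavity tangent-line bound for `t ↦ t ^ ξ` with `ξ ∈ (0,1]`. -/
lemma rpow_tangent_le {ξ : ℝ} (hξ0 : 0 < ξ) (hξ1 : ξ ≤ 1) {s t : ℝ}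
    (hs : 1 ≤ s) (ht : 0 ≤ t) :
    t ^ ξ ≤ s ^ ξ + ξ * s ^ (ξ - 1) * (t - s) := by
  have hs0 : (0 : ℝ) < s := lt_of_lt_of_le one_pos hs
  have hu : (-1 : ℝ) ≤ t / s - 1 := by
    have : 0 ≤ t / s := div_nonneg ht hs0.le
    linarith
  have hB := rpow_one_add_le_one_add_mul_self hu hξ0.le hξ1
  have h1u : 1 + (t / s - 1) = t / s := by ring
  rw [h1u] at hB
  have hspow : (0 : ℝ) < s ^ ξ := Real.rpow_pos_of_pos hs0 ξ
  have hmul := mul_le_mul_of_nonneg_right hB hspow.le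
  have hdiv : (t / s) ^ ξ = t ^ ξ / s ^ ξ := Real.div_rpow ht hs0.le ξ
  rw [hdiv, div_mul_cancel₀ _ (ne_of_gt hspow)] at hmul
  have hsub : s ^ (ξ - 1) = s ^ ξ / s := Real.rpow_sub_one (ne_of_gt hs0) ξ
  calc t ^ ξ ≤ (1 + ξ * (t / s - 1)) * s ^ ξ := hmul
    _ = s ^ ξ + ξ * (s ^ ξ / s) * (t - s) := by field_simp
    _ = s ^ ξ + ξ * s ^ (ξ - 1) * (t - s) := by rw [hsub]

/-- If the Markov kernel `P` satisfies the polynomial Foster–Lyapunov drift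
condition PE(V, c, α, b, C), then for every `ξ ∈ (0,1]` there exists `b₁ ∈ (0,∞)` such that
`P(V^ξ)(x) ≤ V(x)^ξ − c·ξ·V(x)^{α+ξ−1} + b₁·1_C(x)` for all `x` (same set `C`). -/
theorem stmt_2 {𝓧 : Type*} [MeasurableSpace 𝓧]
    (P : Kernel 𝓧 𝓧) [IsMarkovKernel P]
    (V : 𝓧 → ℝ) (hVmeas : Measurable V) (hV1 : ∀ x, 1 ≤ V x)
    (c α b : ℝ) (hα : α ∈ Set.Ioo (0 : ℝ) 1) (hc : 0 < c) (hb : 0 < b)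
    (C : Set 𝓧) (hC : MeasurableSet C) (hVC : ∃ K : ℝ, ∀ x ∈ C, V x ≤ K)
    (hPE : ∀ x, ∫⁻ y, ENNReal.ofReal (V y) ∂(P x)
      ≤ ENNReal.ofReal (V x - c * V x ^ α + C.indicator (fun _ => b) x))
    (ξ : ℝ) (hξ : ξ ∈ Set.Ioc (0 : ℝ) 1) :
    ∃ b₁ : ℝ, 0 < b₁ ∧
      ∀ x, ∫⁻ y, ENNReal.ofReal (V y ^ ξ) ∂(P x)
        ≤ ENNReal.ofReal (V x ^ ξ - c * ξ * V x ^ (α + ξ - 1)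
            + C.indicator (fun _ => b₁) x) := by
  obtain ⟨hξ0, hξ1⟩ := hξ
  refine ⟨b, hb, fun x => ?_⟩
  set s := V x with hsdef
  have hs1 : (1 : ℝ) ≤ s := hV1 x
  have hs0 : (0 : ℝ) < s := lt_of_lt_of_le one_pos hs1
  set A := (1 - ξ) * s ^ ξ with hA
  set B := ξ * s ^ (ξ - 1) with hB
  have hApos : 0 ≤ A := mul_nonneg (by linarith) (Real.rpow_pos_of_pos hs0 ξ).le
  have hBpos : 0 ≤ B := mul_nonneg hξ0.le (Real.rpow_pos_of_pos hs0 _).le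
  set r := s - c * s ^ α + C.indicator (fun _ => b) x with hr
  -- r is nonnegative since the lintegral of ofReal (V y) is at least 1
  have hr0 : 0 ≤ r := by
    by_contra h
    push_neg at h
    have h1 : (1 : ℝ≥0∞) ≤ ∫⁻ y, ENNReal.ofReal (V y) ∂(P x) := by
      calc (1 : ℝ≥0∞) = ∫⁻ _, 1 ∂(P x) := by
            simp [lintegral_const]
        _ ≤ ∫⁻ y, ENNReal.ofReal (V y) ∂(P x) := by
            refine lintegral_mono fun y => ?_
            simpa using ENNReal.one_le_ofReal.mpr (hV1 y)
    have := h1.trans (hPE x)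
    rw [ENNReal.ofReal_eq_zero.mpr h.le] at this
    exact (not_le.mpr zero_lt_one) this
  -- pointwise bound
  have hpt : ∀ y, ENNReal.ofReal (V y ^ ξ)
      ≤ ENNReal.ofReal A + ENNReal.ofReal B * ENNReal.ofReal (V y) := by
    intro y
    have hkey := rpow_tangent_le hξ0 hξ1 hs1 (le_trans zero_le_one (hV1 y))
    have h2 : V y ^ ξ ≤ A + B * V y := by
      have hsx : s ^ (ξ - 1) * s = s ^ ξ := by
        rw [Real.rpow_sub_one (ne_of_gt hs0), div_mul_cancel₀ _ (ne_of_gt hs0)]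
      calc V y ^ ξ ≤ s ^ ξ + ξ * s ^ (ξ - 1) * (V y - s) := hkey
        _ = (1 - ξ) * s ^ ξ + ξ * s ^ (ξ - 1) * V y := by
            rw [← hsx]; ring
        _ = A + B * V y := by rw [hA, hB]
    calc ENNReal.ofReal (V y ^ ξ) ≤ ENNReal.ofReal (A + B * V y) :=
          ENNReal.ofReal_le_ofReal h2
      _ = ENNReal.ofReal A + ENNReal.ofReal (B * V y) :=
          ENNReal.ofReal_add hApos
            (mul_nonneg hBpos (le_trans zero_le_one (hV1 y)))
      _ = ENNReal.ofReal A + ENNReal.ofReal B * ENNReal.ofReal (V y) := by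
          rw [ENNReal.ofReal_mul hBpos]
  calc ∫⁻ y, ENNReal.ofReal (V y ^ ξ) ∂(P x)
      ≤ ∫⁻ y, (ENNReal.ofReal A + ENNReal.ofReal B * ENNReal.ofReal (V y)) ∂(P x) :=
        lintegral_mono hpt
    _ = ENNReal.ofReal A + ENNReal.ofReal B * ∫⁻ y, ENNReal.ofReal (V y) ∂(P x) := by
        rw [lintegral_add_left measurable_const,
          lintegral_const_mul _ (hVmeas.ennreal_ofReal), lintegral_const]
        simp
    _ ≤ ENNReal.ofReal A + ENNReal.ofReal B * ENNReal.ofReal r :=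
        add_le_add_right (mul_le_mul_right (hPE x) _) _
    _ = ENNReal.ofReal (A + B * r) := by
        rw [← ENNReal.ofReal_mul hBpos, ← ENNReal.ofReal_add hApos (mul_nonneg hBpos hr0)]
    _ ≤ ENNReal.ofReal (s ^ ξ - c * ξ * s ^ (α + ξ - 1) + C.indicator (fun _ => b) x) := by
        apply ENNReal.ofReal_le_ofReal
        have hsx : s ^ (ξ - 1) * s = s ^ ξ := by
          rw [Real.rpow_sub_one (ne_of_gt hs0), div_mul_cancel₀ _ (ne_of_gt hs0)]
        have hsa : s ^ (ξ - 1) * s ^ α = s ^ (α + ξ - 1) := by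
          rw [← Real.rpow_add hs0]; ring_nf
        have hBle : B ≤ 1 := by
          have : s ^ (ξ - 1) ≤ 1 :=
            Real.rpow_le_one_of_one_le_of_nonpos hs1 (by linarith)
          calc B = ξ * s ^ (ξ - 1) := rfl
            _ ≤ 1 * 1 := mul_le_mul hξ1 this (Real.rpow_pos_of_pos hs0 _).le one_pos.le
            _ = 1 := one_mul 1
        have hind : 0 ≤ C.indicator (fun _ => b) x := by
          apply Set.indicator_nonneg; intro _ _; exact hb.le
        have hBi : B * C.indicator (fun _ => b) x ≤ C.indicator (fun _ => b) x := by
          nlinarith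
        calc A + B * r
            = s ^ ξ - c * ξ * s ^ (α + ξ - 1) + B * C.indicator (fun _ => b) x := by
              rw [hA, hB, hr, ← hsa, ← hsx]; ring
          _ ≤ s ^ ξ - c * ξ * s ^ (α + ξ - 1) + C.indicator (fun _ => b) x := by linarith
end

section
/- Suppose the Markov kernel P satisfies PE(V, c, α, b, C). Then for every x ∉ C, the expected first return time to C satisfies 𝔼_x[τ_C] ≤ V(x)^{1−α} / (c(1−α)). -/
open MeasureTheory ProbabilityTheory ENNReal Set

/-- The σ-algebra on path space `ℕ → 𝓧` generated by the coordinates `0, …, n`. -/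
def pathFiltration (𝓧 : Type*) [MeasurableSpace 𝓧] (n : ℕ) : MeasurableSpace (ℕ → 𝓧) :=
  MeasurableSpace.comap (fun ω (i : Fin (n + 1)) => ω i) inferInstance

/-- `μ : 𝓧 → Measure (ℕ → 𝓧)` is the family of trajectory laws of the time-homogeneous
Markov chain with transition kernel `P`. -/
def IsMarkovTrajectory {𝓧 : Type*} [MeasurableSpace 𝓧]
    (P : ProbabilityTheory.Kernel 𝓧 𝓧) (μ : 𝓧 → Measure (ℕ → 𝓧)) : Prop :=
  (∀ x, IsProbabilityMeasure (μ x)) ∧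
  (∀ x, μ x {ω | ω 0 = x} = 1) ∧
  (∀ x (n : ℕ) (A : Set (ℕ → 𝓧)), MeasurableSet[pathFiltration 𝓧 n] A →
    ∀ f : 𝓧 → ℝ≥0∞, Measurable f →
      ∫⁻ ω in A, f (ω (n + 1)) ∂(μ x) = ∫⁻ ω in A, (∫⁻ y, f y ∂(P (ω n))) ∂(μ x))

/-- First return time to `C`: `τ_C = inf{n ≥ 1 : X_n ∈ C}` (equal to `∞` if `C` is
never entered at a positive time). -/
noncomputable def returnTime {𝓧 : Type*} (C : Set 𝓧) (ω : ℕ → 𝓧) : ℕ∞ :=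
  ⨅ (n : ℕ) (_ : 1 ≤ n ∧ ω n ∈ C), (n : ℕ∞)

private lemma aux_concave {β t v : ℝ} (hβ0 : 0 < β) (hβ1 : β < 1) (ht : 1 ≤ t) (hv : 0 ≤ v) :
    v ^ β ≤ (1 - β) * t ^ β + β * t ^ (β - 1) * v := by
  have ht0 : (0:ℝ) < t := lt_of_lt_of_le one_pos ht
  have hs : (-1:ℝ) ≤ v / t - 1 := by
    have : (0:ℝ) ≤ v / t := div_nonneg hv ht0.le
    linarith
  have hB := rpow_one_add_le_one_add_mul_self hs hβ0.le hβ1.le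
  have h1 : (1 + (v / t - 1)) = v / t := by ring
  rw [h1] at hB
  have htβ : (0:ℝ) < t ^ β := Real.rpow_pos_of_pos ht0 β
  have h2 : (v / t) ^ β = v ^ β / t ^ β := Real.div_rpow hv ht0.le β
  rw [h2, div_le_iff₀ htβ] at hB
  have h3 : t ^ (β - 1) = t ^ β / t := by
    rw [Real.rpow_sub ht0, Real.rpow_one]
  calc v ^ β ≤ (1 + β * (v / t - 1)) * t ^ β := hB
    _ = (1 - β) * t ^ β + β * t ^ (β - 1) * v := by
        rw [h3]; field_simp; ring

private lemma aux_enat (k : ℕ∞) :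
    (k : ℝ≥0∞) = ∑' n : ℕ, if (n : ℕ∞) < k then (1 : ℝ≥0∞) else 0 := by
  induction k using ENat.recTopCoe with
  | top =>
      have h : ∀ n : ℕ, ((n : ℕ∞) < (⊤ : ℕ∞)) := fun n => lt_top_iff_ne_top.mpr (by simp)
      simp only [h, if_true, ENat.toENNReal_top]
      exact (ENNReal.tsum_const_eq_top_of_ne_zero one_ne_zero).symm
  | coe m =>
      have h0 : ∀ n ∉ Finset.range m, (if (n:ℕ∞) < (m:ℕ∞) then (1:ℝ≥0∞) else 0) = 0 := by
        intro n hn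
        rw [if_neg]
        intro hlt
        exact hn (Finset.mem_range.mpr (by exact_mod_cast hlt))
      rw [tsum_eq_sum h0]
      have h1 : ∀ n ∈ Finset.range m, (if (n:ℕ∞) < (m:ℕ∞) then (1:ℝ≥0∞) else 0) = 1 := by
        intro n hn
        rw [if_pos]
        exact_mod_cast Finset.mem_range.mp hn
      rw [Finset.sum_congr rfl h1, Finset.sum_const, Finset.card_range, nsmul_eq_mul, mul_one]
      simp

/-- Suppose the Markov kernel `P` satisfies PE(V, c, α, b, C).  Then for every
`x ∉ C`, the expected first return time to `C` satisfies
`𝔼_x[τ_C] ≤ V(x)^{1−α} / (c(1−α))`. -/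
theorem stmt_3 {𝓧 : Type*} [MeasurableSpace 𝓧]
    (P : ProbabilityTheory.Kernel 𝓧 𝓧) [ProbabilityTheory.IsMarkovKernel P]
    (μ : 𝓧 → Measure (ℕ → 𝓧)) (hμ : IsMarkovTrajectory P μ)
    (V : 𝓧 → ℝ) (hVmeas : Measurable V) (hV1 : ∀ x, 1 ≤ V x)
    (c α b : ℝ) (hα : α ∈ Set.Ioo (0 : ℝ) 1) (hc : 0 < c) (hb : 0 < b)
    (C : Set 𝓧) (hC : MeasurableSet C) (hVC : ∃ K : ℝ, ∀ x ∈ C, V x ≤ K)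
    (hPE : ∀ x, ∫⁻ y, ENNReal.ofReal (V y) ∂(P x)
      ≤ ENNReal.ofReal (V x - c * V x ^ α + C.indicator (fun _ => b) x)) :
    ∀ x ∉ C, ∫⁻ ω, (returnTime C ω : ℝ≥0∞) ∂(μ x)
      ≤ ENNReal.ofReal (V x ^ (1 - α) / (c * (1 - α))) := by
  obtain ⟨hprob, hinit, hmarkov⟩ := hμ
  obtain ⟨hα0, hα1⟩ := hα
  intro x hx
  set β := 1 - α with hβdef
  have hβ0 : 0 < β := by rw [hβdef]; linarith
  have hβ1 : β < 1 := by rw [hβdef]; linarith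
  have hcβ : (0:ℝ) < c * β := mul_pos hc hβ0
  set W : 𝓧 → ℝ≥0∞ := fun z => ENNReal.ofReal (V z ^ β / (c * β)) with hWdef
  have hWmeas : Measurable W :=
    ENNReal.measurable_ofReal.comp ((hVmeas.pow measurable_const).div_const _)
  -- Key one-step drift inequality for the transformed scale function
  have key : ∀ z ∉ C, (∫⁻ y, W y ∂(P z)) + 1 ≤ W z := by
    intro z hz
    have hVz1 : (1:ℝ) ≤ V z := hV1 z
    have hVz0 : (0:ℝ) < V z := lt_of_lt_of_le one_pos hVz1
    have hdrift : ∫⁻ y, ENNReal.ofReal (V y) ∂(P z) ≤ ENNReal.ofReal (V z - c * V z ^ α) := by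
      have h := hPE z
      rwa [Set.indicator_of_notMem hz, add_zero] at h
    have hone : (1:ℝ≥0∞) ≤ ∫⁻ y, ENNReal.ofReal (V y) ∂(P z) := by
      calc (1:ℝ≥0∞) = ∫⁻ _, (1:ℝ≥0∞) ∂(P z) := by simp
        _ ≤ _ := lintegral_mono fun y => ENNReal.one_le_ofReal.mpr (hV1 y)
    have hdr : (1:ℝ) ≤ V z - c * V z ^ α := ENNReal.one_le_ofReal.mp (le_trans hone hdrift)
    have hr1 : (0:ℝ) ≤ V z ^ (β - 1) := Real.rpow_nonneg hVz0.le _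
    have hr2 : (0:ℝ) ≤ V z ^ β := Real.rpow_nonneg hVz0.le _
    have hn1 : (0:ℝ) ≤ (1 - β) * V z ^ β := mul_nonneg (by linarith) hr2
    have hn2 : (0:ℝ) ≤ β * V z ^ (β - 1) := mul_nonneg hβ0.le hr1
    have hn3 : (0:ℝ) ≤ β * V z ^ (β - 1) * (V z - c * V z ^ α) :=
      mul_nonneg hn2 (by linarith)
    have h3 : V z ^ (β - 1) * V z = V z ^ β := by
      rw [Real.rpow_sub hVz0, Real.rpow_one]; field_simp
    have h4 : V z ^ (β - 1) * V z ^ α = 1 := by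
      rw [← Real.rpow_add hVz0]
      have : β - 1 + α = 0 := by rw [hβdef]; ring
      rw [this, Real.rpow_zero]
    have hpt : ∀ y, ENNReal.ofReal (V y ^ β)
        ≤ ENNReal.ofReal ((1 - β) * V z ^ β)
          + ENNReal.ofReal (β * V z ^ (β - 1)) * ENNReal.ofReal (V y) := by
      intro y
      rw [← ENNReal.ofReal_mul hn2, ← ENNReal.ofReal_add hn1 (mul_nonneg hn2 (by
        linarith [hV1 y]))]
      exact ENNReal.ofReal_le_ofReal
        (aux_concave hβ0 hβ1 hVz1 (le_of_lt (lt_of_lt_of_le one_pos (hV1 y))))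
    have hS : ∫⁻ y, ENNReal.ofReal (V y ^ β) ∂(P z)
        ≤ ENNReal.ofReal ((1 - β) * V z ^ β)
          + ENNReal.ofReal (β * V z ^ (β - 1)) * ENNReal.ofReal (V z - c * V z ^ α) := by
      calc ∫⁻ y, ENNReal.ofReal (V y ^ β) ∂(P z)
          ≤ ∫⁻ y, (ENNReal.ofReal ((1 - β) * V z ^ β)
              + ENNReal.ofReal (β * V z ^ (β - 1)) * ENNReal.ofReal (V y)) ∂(P z) :=
            lintegral_mono hpt
        _ = ENNReal.ofReal ((1 - β) * V z ^ β)
              + ENNReal.ofReal (β * V z ^ (β - 1)) * ∫⁻ y, ENNReal.ofReal (V y) ∂(P z) := by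
            rw [lintegral_add_left measurable_const,
              lintegral_const_mul _ hVmeas.ennreal_ofReal,
              lintegral_const, measure_univ, mul_one]
        _ ≤ _ := add_le_add_right (mul_le_mul_right hdrift _) _
    have harith : ENNReal.ofReal ((1 - β) * V z ^ β)
          + ENNReal.ofReal (β * V z ^ (β - 1)) * ENNReal.ofReal (V z - c * V z ^ α)
        = ENNReal.ofReal (V z ^ β - c * β) := by
      rw [← ENNReal.ofReal_mul hn2, ← ENNReal.ofReal_add hn1 hn3]
      congr 1
      have expand : β * V z ^ (β - 1) * (V z - c * V z ^ α)
          = β * (V z ^ (β - 1) * V z) - c * β * (V z ^ (β - 1) * V z ^ α) := by ring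
      rw [expand, h3, h4]
      ring
    have hsub : (0:ℝ) ≤ V z ^ β - c * β := by
      nlinarith [mul_le_mul_of_nonneg_left hdr hn2]
    have hScβ : (∫⁻ y, ENNReal.ofReal (V y ^ β) ∂(P z)) + ENNReal.ofReal (c * β)
        ≤ ENNReal.ofReal (V z ^ β) := by
      calc (∫⁻ y, ENNReal.ofReal (V y ^ β) ∂(P z)) + ENNReal.ofReal (c * β)
          ≤ ENNReal.ofReal (V z ^ β - c * β) + ENNReal.ofReal (c * β) :=
            add_le_add_left (hS.trans_eq harith) _
        _ = ENNReal.ofReal (V z ^ β) := by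
            rw [← ENNReal.ofReal_add hsub hcβ.le]; congr 1; ring
    set K := ENNReal.ofReal (c * β) with hK
    have hK0 : K ≠ 0 := by
      rw [hK]; simpa using (ENNReal.ofReal_pos.mpr hcβ).ne'
    have hKtop : K ≠ ⊤ := ENNReal.ofReal_ne_top
    have hWy : ∀ y, W y = ENNReal.ofReal (V y ^ β) / K := by
      intro y
      rw [hWdef, hK]
      exact ENNReal.ofReal_div_of_pos hcβ
    have hint : ∫⁻ y, W y ∂(P z) = (∫⁻ y, ENNReal.ofReal (V y ^ β) ∂(P z)) / K := by
      simp_rw [hWy, ENNReal.div_eq_inv_mul]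
      rw [lintegral_const_mul' _ _ (ENNReal.inv_ne_top.mpr hK0)]
    rw [hint, hWy z]
    have hdiv := ENNReal.div_le_div_right hScβ K
    rwa [ENNReal.add_div, ENNReal.div_self hK0 hKtop] at hdiv
  -- Path-space part
  set ν := μ x with hν
  haveI : IsProbabilityMeasure ν := hprob x
  have hnull : ∀ T : Set (ℕ → 𝓧), MeasurableSet T → (∀ ω ∈ T, ω 0 ≠ x) → ν T = 0 := by
    intro T hT hTx
    have hsub : {ω : ℕ → 𝓧 | ω 0 = x} ⊆ Tᶜ := fun ω hω hmem => hTx ω hmem hω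
    have h1 : (1:ℝ≥0∞) ≤ ν Tᶜ := by
      rw [← hinit x]; exact measure_mono hsub
    have h2 : ν T + ν Tᶜ = 1 := by
      rw [measure_add_measure_compl hT, measure_univ]
    have h3 : ν T + 1 ≤ 0 + 1 := by
      calc ν T + 1 ≤ ν T + ν Tᶜ := add_le_add_right h1 _
        _ = 1 := h2
        _ = 0 + 1 := (zero_add 1).symm
    exact le_antisymm (ENNReal.le_of_add_le_add_right one_ne_top h3) zero_le
  have hE1 : ∀ᵐ ω ∂ν, ω 0 ∉ C := by
    rw [ae_iff]
    have hset : {ω : ℕ → 𝓧 | ¬ ω 0 ∉ C} = (fun ω : ℕ → 𝓧 => ω 0) ⁻¹' C := by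
      ext ω; simp
    rw [hset]
    exact hnull _ ((measurable_pi_apply 0) hC)
      (fun ω hω h0 => hx (h0 ▸ hω))
  have hE2 : ∀ᵐ ω ∂ν, W (ω 0) = W x := by
    rw [ae_iff]
    apply hnull _ ((hWmeas.comp (measurable_pi_apply 0)) (measurableSet_singleton (W x)).compl)
    intro ω hω h0
    exact hω (by show W (ω 0) ∈ ({W x} : Set ℝ≥0∞); rw [h0]; exact Set.mem_singleton _)
  set A : ℕ → Set (ℕ → 𝓧) := fun n => {ω | ∀ k, 1 ≤ k → k ≤ n → ω k ∉ C} with hA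
  have hAmeas : ∀ n, MeasurableSet (A n) := by
    intro n
    have heq : A n = ⋂ (k : ℕ), ⋂ (_ : 1 ≤ k ∧ k ≤ n), (fun ω : ℕ → 𝓧 => ω k) ⁻¹' Cᶜ := by
      ext ω
      simp only [hA, Set.mem_setOf_eq, Set.mem_iInter, Set.mem_preimage, Set.mem_compl_iff]
      exact ⟨fun h k hk => h k hk.1 hk.2, fun h k h1 h2 => h k ⟨h1, h2⟩⟩
    rw [heq]
    exact MeasurableSet.iInter fun k => MeasurableSet.iInter fun _ =>
      (measurable_pi_apply k) hC.compl
  have hAfilt : ∀ n, MeasurableSet[pathFiltration 𝓧 n] (A n) := by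
    intro n
    refine ⟨⋂ (i : Fin (n+1)), ⋂ (_ : 1 ≤ (i : ℕ)), (fun v : Fin (n+1) → 𝓧 => v i) ⁻¹' Cᶜ,
      ?_, ?_⟩
    · exact MeasurableSet.iInter fun i => MeasurableSet.iInter fun _ =>
        (measurable_pi_apply i) hC.compl
    · ext ω
      simp only [Set.mem_preimage, Set.mem_iInter, Set.mem_compl_iff, hA, Set.mem_setOf_eq]
      constructor
      · intro h k h1 h2
        exact h ⟨k, by omega⟩ h1
      · intro h i hi
        exact h i hi (Nat.lt_succ_iff.mp i.isLt)
  have hτA : ∀ (n : ℕ) (ω : ℕ → 𝓧), ((n : ℕ∞) < returnTime C ω ↔ ω ∈ A n) := by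
    intro n ω
    constructor
    · intro h k h1 h2 hkC
      have hle : returnTime C ω ≤ (k : ℕ∞) :=
        iInf_le_of_le k (iInf_le_of_le ⟨h1, hkC⟩ le_rfl)
      have hkn : (n:ℕ∞) < (k:ℕ∞) := lt_of_lt_of_le h hle
      have : n < k := by exact_mod_cast hkn
      omega
    · intro h
      have h2 : ((n+1 : ℕ) : ℕ∞) ≤ returnTime C ω := by
        refine le_iInf fun m => le_iInf fun hm => ?_
        have hmn : n < m := by
          by_contra hcon
          push_neg at hcon
          exact h m hm.1 hcon hm.2
        exact_mod_cast hmn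
      calc (n:ℕ∞) < ((n+1:ℕ):ℕ∞) := by exact_mod_cast Nat.lt_succ_self n
        _ ≤ _ := h2
  have hsum : ∫⁻ ω, ((returnTime C ω : ℕ∞) : ℝ≥0∞) ∂ν = ∑' n, ν (A n) := by
    have hpt : ∀ ω : ℕ → 𝓧, ((returnTime C ω : ℕ∞) : ℝ≥0∞)
        = ∑' n : ℕ, (A n).indicator (fun _ => (1:ℝ≥0∞)) ω := by
      intro ω
      rw [aux_enat]
      congr 1
      funext n
      by_cases hω : ω ∈ A n
      · rw [if_pos ((hτA n ω).mpr hω), Set.indicator_of_mem hω]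
      · rw [if_neg (fun hlt => hω ((hτA n ω).mp hlt)), Set.indicator_of_notMem hω]
    simp_rw [hpt]
    rw [lintegral_tsum fun n => (measurable_const.indicator (hAmeas n)).aemeasurable]
    congr 1
    funext n
    rw [lintegral_indicator_const (hAmeas n), one_mul]
  set a : ℕ → ℝ≥0∞ := fun n => ∫⁻ ω in A n, W (ω n) ∂ν with ha
  have hrec : ∀ n, ν (A n) + a (n+1) ≤ a n := by
    intro n
    have hAsub : A (n+1) ⊆ A n := by
      intro ω hω k h1 h2
      exact hω k h1 (by omega)
    have hstep1 : a (n+1) ≤ ∫⁻ ω in A n, W (ω (n+1)) ∂ν :=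
      lintegral_mono_set hAsub
    have hstep2 : ∫⁻ ω in A n, W (ω (n+1)) ∂ν
        = ∫⁻ ω in A n, (∫⁻ y, W y ∂(P (ω n))) ∂ν :=
      hmarkov x n (A n) (hAfilt n) W hWmeas
    have hae : ∀ᵐ ω ∂(ν.restrict (A n)), (1:ℝ≥0∞) + (∫⁻ y, W y ∂(P (ω n))) ≤ W (ω n) := by
      filter_upwards [ae_restrict_mem (hAmeas n), ae_restrict_of_ae hE1] with ω hω h0
      have hωn : ω n ∉ C := by
        cases n with
        | zero => exact h0
        | succ m => exact hω (m+1) (by omega) (by omega)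
      have hk := key (ω n) hωn
      rwa [add_comm] at hk
    calc ν (A n) + a (n+1)
        ≤ ν (A n) + ∫⁻ ω in A n, (∫⁻ y, W y ∂(P (ω n))) ∂ν := by
          rw [← hstep2]; exact add_le_add_right hstep1 _
      _ = ∫⁻ ω in A n, ((1:ℝ≥0∞) + ∫⁻ y, W y ∂(P (ω n))) ∂ν := by
          rw [lintegral_add_left measurable_const, setLIntegral_one]
      _ ≤ ∫⁻ ω in A n, W (ω n) ∂ν := lintegral_mono_ae hae
      _ = a n := rfl
  have htel : ∀ N, (∑ n ∈ Finset.range N, ν (A n)) + a N ≤ a 0 := by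
    intro N
    induction N with
    | zero => simp
    | succ N ih =>
        calc (∑ n ∈ Finset.range (N+1), ν (A n)) + a (N+1)
            = (∑ n ∈ Finset.range N, ν (A n)) + (ν (A N) + a (N+1)) := by
              rw [Finset.sum_range_succ]; ring
          _ ≤ (∑ n ∈ Finset.range N, ν (A n)) + a N := add_le_add_right (hrec N) _
          _ ≤ a 0 := ih
  have ha0 : a 0 = ENNReal.ofReal (V x ^ β / (c * β)) := by
    have hA0 : A 0 = Set.univ := by
      ext ω
      simp only [hA, Set.mem_setOf_eq, Set.mem_univ, iff_true]
      intro k h1 h2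
      omega
    have h1 : a 0 = ∫⁻ ω, W (ω 0) ∂ν := by
      rw [ha]
      simp only [hA0, Measure.restrict_univ]
    rw [h1, lintegral_congr_ae hE2, lintegral_const, measure_univ, mul_one, hWdef]
  calc ∫⁻ ω, ((returnTime C ω : ℕ∞) : ℝ≥0∞) ∂ν = ∑' n, ν (A n) := hsum
    _ ≤ a 0 := by
        rw [ENNReal.tsum_eq_iSup_nat]
        exact iSup_le fun N => le_trans le_self_add (htel N)
    _ = ENNReal.ofReal (V x ^ β / (c * β)) := ha0
end

section
/- Suppose the Markov kernel P satisfies PE(V, c, α, b, C), and let ρ ∈ [1, 1/(1−α)]. Define V_ρ(x) = V(x)^{1−ρ(1−α)} and r_ρ(n) = (n+1)^{ρ−1}. Then there exists a constant M < ∞ such that for all x ∈ 𝒳, 𝔼_x[ Σ_{n=0}^{τ_C − 1} r_ρ(n)·V_ρ(X_n) ] ≤ M·V(x). -/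
open MeasureTheory ProbabilityTheory ENNReal Set

section RealHelpers

/-- Tangent line lies above the graph when the derivative is antitone (concavity). -/
lemma tangent_le_of_deriv_anti {f f' : ℝ → ℝ}
    (hder : ∀ u : ℝ, 0 < u → HasDerivAt f (f' u) u)
    (hanti : ∀ u v : ℝ, 0 < u → u ≤ v → f' v ≤ f' u)
    {v w : ℝ} (hv : 0 < v) (hw : 0 < w) :
    f w ≤ f v + f' v * (w - v) := by
  rcases lt_trichotomy w v with h | h | h
  · obtain ⟨ξ, hξ, hslope⟩ := exists_hasDerivAt_eq_slope f f' h
      (fun u hu => (hder u (lt_of_lt_of_le hw hu.1)).continuousAt.continuousWithinAt)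
      (fun u hu => hder u (lt_of_lt_of_le hw hu.1.le))
    have hξ0 : 0 < ξ := lt_trans hw hξ.1
    rw [eq_div_iff (by linarith : v - w ≠ 0)] at hslope
    have h2 : f' v ≤ f' ξ := hanti ξ v hξ0 hξ.2.le
    nlinarith [hslope, mul_le_mul_of_nonneg_right h2 (by linarith : (0:ℝ) ≤ v - w)]
  · simp [h]
  · obtain ⟨ξ, hξ, hslope⟩ := exists_hasDerivAt_eq_slope f f' h
      (fun u hu => (hder u (lt_of_lt_of_le hv hu.1)).continuousAt.continuousWithinAt)
      (fun u hu => hder u (lt_of_lt_of_le hv hu.1.le))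
    have hξ0 : 0 < ξ := lt_trans hv hξ.1
    rw [eq_div_iff (by linarith : w - v ≠ 0)] at hslope
    have h2 : f' ξ ≤ f' v := hanti v ξ hv hξ.1.le
    nlinarith [hslope, mul_le_mul_of_nonneg_right h2 (by linarith : (0:ℝ) ≤ w - v)]

/-- Tangent line lies below the graph when the derivative is monotone (convexity). -/
lemma tangent_ge_of_deriv_mono {f f' : ℝ → ℝ}
    (hder : ∀ u : ℝ, 0 < u → HasDerivAt f (f' u) u)
    (hmono : ∀ u v : ℝ, 0 < u → u ≤ v → f' u ≤ f' v)
    {v w : ℝ} (hv : 0 < v) (hw : 0 < w) :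
    f v + f' v * (w - v) ≤ f w := by
  have := tangent_le_of_deriv_anti (f := fun u => -f u) (f' := fun u => -f' u)
    (fun u hu => (hder u hu).neg) (fun u v hu huv => neg_le_neg (hmono u v hu huv)) hv hw
  simp only [neg_mul] at this
  linarith

/-- Concave tangent bound for `w ↦ w ^ γ`, `0 < γ ≤ 1`. -/
lemma rpow_tangent_concave {γ : ℝ} (hγ0 : 0 < γ) (hγ1 : γ ≤ 1)
    {v w : ℝ} (hv : 0 < v) (hw : 0 < w) :
    w ^ γ ≤ v ^ γ + γ * v ^ (γ - 1) * (w - v) := by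
  have key : ∀ x : ℝ, 0 < x → x ^ (γ - 1) = (x ^ (1 - γ))⁻¹ := by
    intro x hx
    rw [show γ - 1 = -(1 - γ) by ring, Real.rpow_neg hx.le]
  refine tangent_le_of_deriv_anti (f := fun u => u ^ γ) (f' := fun u => γ * u ^ (γ - 1))
    (fun u hu => Real.hasDerivAt_rpow_const (Or.inl hu.ne')) ?_ hv hw
  intro u v hu huv
  have hvpos : 0 < v := lt_of_lt_of_le hu huv
  rw [key u hu, key v hvpos]
  have h1 : u ^ (1 - γ) ≤ v ^ (1 - γ) := Real.rpow_le_rpow hu.le huv (by linarith)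
  have h2 : (0:ℝ) < u ^ (1 - γ) := Real.rpow_pos_of_pos hu _
  exact mul_le_mul_of_nonneg_left (inv_anti₀ h2 h1) hγ0.le

/-- Convex tangent bound for `w ↦ w ^ p`, `1 ≤ p`. -/
lemma rpow_tangent_convex {p : ℝ} (hp : 1 ≤ p)
    {v w : ℝ} (hv : 0 < v) (hw : 0 < w) :
    v ^ p + p * v ^ (p - 1) * (w - v) ≤ w ^ p := by
  refine tangent_ge_of_deriv_mono (f := fun u => u ^ p) (f' := fun u => p * u ^ (p - 1))
    (fun u hu => Real.hasDerivAt_rpow_const (Or.inl hu.ne')) ?_ hv hw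
  intro u v hu huv
  exact mul_le_mul_of_nonneg_left
    (Real.rpow_le_rpow hu.le huv (by linarith)) (by linarith)

end RealHelpers
section CompositeHelpers

variable {γ ρ₀ a : ℝ}

lemma one_le_rho (hγ0 : 0 < γ) (hγ1 : γ < 1) (hρ₀ : ρ₀ = 1/γ) : 1 ≤ ρ₀ := by
  rw [hρ₀, le_div_iff₀ hγ0, one_mul]; exact hγ1.le

lemma beta_closed (hρ₀ : ρ₀ = 1/γ) (ha : 0 ≤ a) {u : ℝ} (hu : 0 < u) (hγ0 : 0 < γ) :
    (1 + a * (u ^ γ)⁻¹) ^ (ρ₀ - 1)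
      = (a + u ^ γ) ^ (ρ₀ - 1) * ((u ^ γ) ^ (ρ₀ - 1))⁻¹ := by
  have hupow : (0:ℝ) < u ^ γ := Real.rpow_pos_of_pos hu γ
  have e2 : 1 + a * (u ^ γ)⁻¹ = (a + u ^ γ) / (u ^ γ) := by field_simp; ring
  rw [e2, Real.div_rpow (by positivity) hupow.le, div_eq_mul_inv]

lemma pow_pow_inv (hγρ : γ * ρ₀ = 1) {u : ℝ} (hu : 0 < u) :
    ((u ^ γ) ^ (ρ₀ - 1))⁻¹ = u ^ (γ - 1) := by
  rw [← Real.rpow_mul hu.le]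
  rw [show γ * (ρ₀ - 1) = -(γ - 1) by linear_combination hγρ]
  rw [Real.rpow_neg hu.le, inv_inv]

lemma phi_hasDeriv (hγ0 : 0 < γ) (hγ1 : γ < 1) (hρ₀ : ρ₀ = 1/γ) (ha : 0 ≤ a)
    {u : ℝ} (hu : 0 < u) :
    HasDerivAt (fun t : ℝ => (a + t ^ γ) ^ ρ₀) ((1 + a * (u ^ γ)⁻¹) ^ (ρ₀ - 1)) u := by
  have hγρ : γ * ρ₀ = 1 := by rw [hρ₀]; field_simp
  have hρ1 : 1 ≤ ρ₀ := one_le_rho hγ0 hγ1 hρ₀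
  have hupow : (0:ℝ) < u ^ γ := Real.rpow_pos_of_pos hu γ
  have h1 : HasDerivAt (fun t : ℝ => a + t ^ γ) (γ * u ^ (γ - 1)) u :=
    (Real.hasDerivAt_rpow_const (p := γ) (Or.inl hu.ne')).const_add a
  have h2 := h1.rpow_const (p := ρ₀) (Or.inr hρ1)
  have heq : γ * u ^ (γ - 1) * ρ₀ * (a + u ^ γ) ^ (ρ₀ - 1)
      = (1 + a * (u ^ γ)⁻¹) ^ (ρ₀ - 1) := by
    rw [beta_closed hρ₀ ha hu hγ0, pow_pow_inv hγρ hu]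
    linear_combination u ^ (γ - 1) * (a + u ^ γ) ^ (ρ₀ - 1) * hγρ
  exact heq ▸ h2

lemma phi_tangent (hγ0 : 0 < γ) (hγ1 : γ < 1) (hρ₀ : ρ₀ = 1/γ) (ha : 0 ≤ a)
    {v w : ℝ} (hv : 0 < v) (hw : 0 < w) :
    (a + w ^ γ) ^ ρ₀ ≤ (a + v ^ γ) ^ ρ₀ + (1 + a * (v ^ γ)⁻¹) ^ (ρ₀ - 1) * (w - v) := by
  have hρ1 : 1 ≤ ρ₀ := one_le_rho hγ0 hγ1 hρ₀
  refine tangent_le_of_deriv_anti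
    (f := fun t : ℝ => (a + t ^ γ) ^ ρ₀)
    (f' := fun u : ℝ => (1 + a * (u ^ γ)⁻¹) ^ (ρ₀ - 1))
    (fun u hu => phi_hasDeriv hγ0 hγ1 hρ₀ ha hu) ?_ hv hw
  intro u v hu huv
  have hvpos : 0 < v := lt_of_lt_of_le hu huv
  have h1 : u ^ γ ≤ v ^ γ := Real.rpow_le_rpow hu.le huv hγ0.le
  have h2 : (0:ℝ) < u ^ γ := Real.rpow_pos_of_pos hu γ
  apply Real.rpow_le_rpow (by positivity) _ (by linarith)
  have hinv : (v ^ γ)⁻¹ ≤ (u ^ γ)⁻¹ := inv_anti₀ h2 h1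
  nlinarith [hinv, ha]

lemma beta_mul_le (hγ0 : 0 < γ) (hγ1 : γ < 1) (hρ₀ : ρ₀ = 1/γ) (ha : 0 ≤ a)
    {u : ℝ} (hu : 0 < u) :
    (1 + a * (u ^ γ)⁻¹) ^ (ρ₀ - 1) * u ≤ (a + u ^ γ) ^ ρ₀ := by
  have hγρ : γ * ρ₀ = 1 := by rw [hρ₀]; field_simp
  have hupow : (0:ℝ) < u ^ γ := Real.rpow_pos_of_pos hu γ
  have hsum : (0:ℝ) < a + u ^ γ := by linarith
  calc (1 + a * (u ^ γ)⁻¹) ^ (ρ₀ - 1) * u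
      = (a + u ^ γ) ^ (ρ₀ - 1) * (u ^ (γ - 1) * u) := by
        rw [beta_closed hρ₀ ha hu hγ0, pow_pow_inv hγρ hu]; ring
    _ = (a + u ^ γ) ^ (ρ₀ - 1) * u ^ γ := by
        rw [← Real.rpow_add_one hu.ne' (γ - 1), sub_add_cancel]
    _ ≤ (a + u ^ γ) ^ (ρ₀ - 1) * (a + u ^ γ) := by
        have := Real.rpow_nonneg hsum.le (ρ₀ - 1)
        nlinarith [this, ha]
    _ = (a + u ^ γ) ^ ρ₀ := by
        rw [← Real.rpow_add_one hsum.ne' (ρ₀ - 1), sub_add_cancel]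

end CompositeHelpers
section Integration

open ProbabilityTheory

/-- One-step Jensen-type bound: if the mean of `V` under `P x` is at most `u`, then the
mean of `d * (a + V^γ)^ρ₀` is at most `d * (a + u^γ)^ρ₀`. -/
lemma B_key {𝓧 : Type*} [MeasurableSpace 𝓧] (P : Kernel 𝓧 𝓧) [IsMarkovKernel P]
    (V : 𝓧 → ℝ) (hVmeas : Measurable V) (hV1 : ∀ x, 1 ≤ V x)
    {γ ρ₀ d a u : ℝ} (hγ0 : 0 < γ) (hγ1 : γ < 1) (hρ₀ : ρ₀ = 1/γ)
    (hd : 0 ≤ d) (ha : 0 ≤ a) (hu : 1 ≤ u) (x : 𝓧)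
    (hint : ∫⁻ y, ENNReal.ofReal (V y) ∂(P x) ≤ ENNReal.ofReal u) :
    ∫⁻ y, ENNReal.ofReal (d * (a + (V y) ^ γ) ^ ρ₀) ∂(P x)
      ≤ ENNReal.ofReal (d * (a + u ^ γ) ^ ρ₀) := by
  have hupos : (0:ℝ) < u := lt_of_lt_of_le one_pos hu
  set β := (1 + a * (u ^ γ)⁻¹) ^ (ρ₀ - 1) with hβdef
  have hβ0 : 0 ≤ β := Real.rpow_nonneg (by positivity) _
  set a₀ := (a + u ^ γ) ^ ρ₀ - β * u with ha₀def
  have ha₀ : 0 ≤ a₀ := by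
    have := beta_mul_le hγ0 hγ1 hρ₀ ha hupos
    simp only [ha₀def, hβdef]; linarith
  have htan : ∀ w : ℝ, 1 ≤ w → (a + w ^ γ) ^ ρ₀ ≤ a₀ + β * w := by
    intro w hw
    have := phi_tangent hγ0 hγ1 hρ₀ ha hupos (lt_of_lt_of_le one_pos hw)
    simp only [ha₀def, hβdef] at *
    linarith
  have hVof : Measurable fun y => ENNReal.ofReal (V y) := hVmeas.ennreal_ofReal
  calc ∫⁻ y, ENNReal.ofReal (d * (a + V y ^ γ) ^ ρ₀) ∂P x
      ≤ ∫⁻ y, ENNReal.ofReal d * (ENNReal.ofReal a₀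
          + ENNReal.ofReal β * ENNReal.ofReal (V y)) ∂P x := by
        apply lintegral_mono; intro y
        have h1 : d * (a + V y ^ γ) ^ ρ₀ ≤ d * (a₀ + β * V y) :=
          mul_le_mul_of_nonneg_left (htan (V y) (hV1 y)) hd
        refine le_trans (ENNReal.ofReal_le_ofReal h1) (le_of_eq ?_)
        rw [ENNReal.ofReal_mul hd,
          ENNReal.ofReal_add ha₀ (mul_nonneg hβ0 (le_trans zero_le_one (hV1 y))), ENNReal.ofReal_mul hβ0]
    _ = ENNReal.ofReal d * (ENNReal.ofReal a₀
          + ENNReal.ofReal β * ∫⁻ y, ENNReal.ofReal (V y) ∂P x) := by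
        rw [lintegral_const_mul _ (by fun_prop),
          lintegral_add_left measurable_const,
          lintegral_const_mul _ hVof, lintegral_const, measure_univ, mul_one]
    _ ≤ ENNReal.ofReal d * (ENNReal.ofReal a₀ + ENNReal.ofReal β * ENNReal.ofReal u) := by
        gcongr
    _ = ENNReal.ofReal (d * (a + u ^ γ) ^ ρ₀) := by
        rw [← ENNReal.ofReal_mul hβ0, ← ENNReal.ofReal_add ha₀ (by positivity),
          ← ENNReal.ofReal_mul hd]
        congr 1
        simp only [ha₀def]; ring

end Integration

section DriftArith

set_option maxHeartbeats 1000000 in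
/-- The core real arithmetic for the off-`C` drift step. -/
lemma drift_arith {α γ ρ₀ c s m d v : ℝ}
    (hα0 : 0 < α) (hα1 : α < 1) (hγ : γ = 1 - α) (hρ₀ : ρ₀ = 1/γ) (hc : 0 < c)
    (hs : s = c * γ / 2) (hm : m = min s 1) (hd : d = 1 / (s * m ^ (ρ₀ - 1)))
    (hv : 1 ≤ v) (hv₀ : 1 ≤ v - c * v ^ α) (n : ℕ) :
    d * (s * ((n:ℝ) + 1) + (v - c * v ^ α) ^ γ) ^ ρ₀ + ((n:ℝ) + 1) ^ (ρ₀ - 1)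
      ≤ d * (s * (n:ℝ) + v ^ γ) ^ ρ₀ := by
  have hγ0 : 0 < γ := by rw [hγ]; linarith
  have hγ1 : γ < 1 := by rw [hγ]; linarith
  have hρ1 : 1 ≤ ρ₀ := one_le_rho hγ0 hγ1 hρ₀
  have hs0 : 0 < s := by rw [hs]; positivity
  have hm0 : 0 < m := by rw [hm]; exact lt_min hs0 one_pos
  have hms : m ≤ s := by rw [hm]; exact min_le_left _ _
  have hm1 : m ≤ 1 := by rw [hm]; exact min_le_right _ _
  have hmpow : (0:ℝ) < m ^ (ρ₀ - 1) := Real.rpow_pos_of_pos hm0 _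
  have hd0 : 0 < d := by rw [hd]; positivity
  have hd1 : d * (s * m ^ (ρ₀ - 1)) = 1 := by
    rw [hd]; field_simp
  have hvpos : (0:ℝ) < v := lt_of_lt_of_le one_pos hv
  have hv₀pos : (0:ℝ) < v - c * v ^ α := lt_of_lt_of_le one_pos hv₀
  set v₀ := v - c * v ^ α with hv₀def
  -- Step (i): v₀ ^ γ ≤ v ^ γ - 2 s
  have epow : v ^ (γ - 1) * v ^ α = 1 := by
    rw [← Real.rpow_add hvpos, show γ - 1 + α = 0 by rw [hγ]; ring, Real.rpow_zero]
  have htang := rpow_tangent_concave hγ0 hγ1.le hvpos hv₀pos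
  have hstep1 : v₀ ^ γ ≤ v ^ γ - 2 * s := by
    have e : γ * v ^ (γ - 1) * (v₀ - v) = -(γ * c) := by
      have : v₀ - v = -(c * v ^ α) := by rw [hv₀def]; ring
      rw [this]
      linear_combination (-(γ * c)) * epow
    rw [hs]
    linarith [htang, e]
  have hv₀γ : (1:ℝ) ≤ v₀ ^ γ := Real.one_le_rpow hv₀ hγ0.le
  set t := s * (n:ℝ) + v ^ γ with htdef
  have hn0 : (0:ℝ) ≤ (n:ℝ) := Nat.cast_nonneg n
  have hbase : s * ((n:ℝ) + 1) + v₀ ^ γ ≤ t - s := by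
    simp only [htdef]; linarith [hstep1]
  have hbase0 : (0:ℝ) < s * ((n:ℝ) + 1) + v₀ ^ γ := by nlinarith
  have hts : (0:ℝ) < t - s := lt_of_lt_of_le hbase0 hbase
  have htpos : (0:ℝ) < t := by linarith
  -- Step (ii)
  have hmono : (s * ((n:ℝ) + 1) + v₀ ^ γ) ^ ρ₀ ≤ (t - s) ^ ρ₀ :=
    Real.rpow_le_rpow hbase0.le hbase (by linarith)
  -- Step (iii): convex tangent
  have hconv := rpow_tangent_convex hρ1 hts htpos
  -- hconv : (t-s)^ρ₀ + ρ₀ * (t-s)^(ρ₀-1) * (t - (t-s)) ≤ t^ρ₀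
  have hconv' : (t - s) ^ ρ₀ + ρ₀ * (t - s) ^ (ρ₀ - 1) * s ≤ t ^ ρ₀ := by
    have : t - (t - s) = s := by ring
    calc (t - s) ^ ρ₀ + ρ₀ * (t - s) ^ (ρ₀ - 1) * s
        = (t - s) ^ ρ₀ + ρ₀ * (t - s) ^ (ρ₀ - 1) * (t - (t - s)) := by rw [this]
      _ ≤ t ^ ρ₀ := hconv
  -- Step (iv): lower bound the increment
  have hmn : m * ((n:ℝ) + 1) ≤ t - s := by
    have h1 : m * (n:ℝ) ≤ s * (n:ℝ) := mul_le_mul_of_nonneg_right hms hn0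
    have h2 : s * (n:ℝ) + 1 ≤ t - s := by
      simp only [htdef]; linarith [hstep1, hv₀γ, hs0.le]
    linarith [h1, hm1, h2]
  have hrq : m ^ (ρ₀ - 1) * ((n:ℝ) + 1) ^ (ρ₀ - 1) ≤ (t - s) ^ (ρ₀ - 1) := by
    rw [← Real.mul_rpow hm0.le (by positivity)]
    exact Real.rpow_le_rpow (by positivity) hmn (by linarith)
  set q := ((n:ℝ) + 1) ^ (ρ₀ - 1) with hqdef
  have hq0 : 0 ≤ q := Real.rpow_nonneg (by positivity) _
  set r := (t - s) ^ (ρ₀ - 1) with hrdef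
  have hr0 : 0 ≤ r := Real.rpow_nonneg hts.le _
  have hA3 : q ≤ d * (ρ₀ * r * s) := by
    have e0 : q = d * (s * m ^ (ρ₀ - 1)) * q := by rw [hd1, one_mul]
    have e1 : d * (s * m ^ (ρ₀ - 1)) * q ≤ d * s * r := by
      have := mul_le_mul_of_nonneg_left hrq (by positivity : (0:ℝ) ≤ d * s)
      calc d * (s * m ^ (ρ₀ - 1)) * q = d * s * (m ^ (ρ₀ - 1) * q) := by ring
        _ ≤ d * s * r := this
    have e2 : d * s * r ≤ d * (ρ₀ * r * s) := by
      nlinarith [mul_le_mul_of_nonneg_left hρ1 (mul_nonneg (mul_nonneg hd0.le hs0.le) hr0)]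
    linarith [e0 ▸ (e1.trans e2)]
  have hA1 : d * (s * ((n:ℝ) + 1) + v₀ ^ γ) ^ ρ₀ ≤ d * (t - s) ^ ρ₀ :=
    mul_le_mul_of_nonneg_left hmono hd0.le
  have hA2 : d * (t - s) ^ ρ₀ + d * (ρ₀ * r * s) ≤ d * t ^ ρ₀ := by
    have e : d * (t - s) ^ ρ₀ + d * (ρ₀ * r * s) = d * ((t - s) ^ ρ₀ + ρ₀ * r * s) := by
      ring
    rw [e, hrdef]
    exact mul_le_mul_of_nonneg_left hconv' hd0.le
  linarith [hA1, hA2, hA3]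

end DriftArith
section Comparison

variable {𝓧 : Type*} [MeasurableSpace 𝓧]

/-- The event that the chain has not returned to `C` by time `n`. -/
def Aset (C : Set 𝓧) (n : ℕ) : Set (ℕ → 𝓧) := {ω | ∀ i, 1 ≤ i → i ≤ n → ω i ∉ C}

lemma Aset_zero (C : Set 𝓧) : Aset C 0 = Set.univ := by
  ext ω; simp only [Aset, Set.mem_setOf_eq, Set.mem_univ, iff_true]
  intro i h1 h2; omega

lemma Aset_succ_subset (C : Set 𝓧) (n : ℕ) : Aset C (n+1) ⊆ Aset C n :=
  fun ω h i h1 h2 => h i h1 (h2.trans (Nat.le_succ n))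

lemma measurable_Aset (C : Set 𝓧) (hC : MeasurableSet C) (n : ℕ) :
    MeasurableSet (Aset C n) := by
  have : Aset C n = ⋂ (i : ℕ) (_ : 1 ≤ i ∧ i ≤ n), (fun ω : ℕ → 𝓧 => ω i) ⁻¹' Cᶜ := by
    ext ω
    simp only [Aset, Set.mem_setOf_eq, Set.mem_iInter, Set.mem_preimage, Set.mem_compl_iff]
    tauto
  rw [this]
  exact MeasurableSet.iInter fun i => MeasurableSet.iInter fun _ =>
    (measurable_pi_apply i) hC.compl

lemma filt_Aset (C : Set 𝓧) (hC : MeasurableSet C) (n : ℕ) :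
    MeasurableSet[pathFiltration 𝓧 n] (Aset C n) := by
  show MeasurableSet[MeasurableSpace.comap (fun ω (i : Fin (n + 1)) => ω i) inferInstance]
    (Aset C n)
  rw [MeasurableSpace.measurableSet_comap]
  refine ⟨{v : Fin (n+1) → 𝓧 | ∀ i : Fin (n+1), 1 ≤ (i:ℕ) → v i ∉ C}, ?_, ?_⟩
  · have : {v : Fin (n+1) → 𝓧 | ∀ i : Fin (n+1), 1 ≤ (i:ℕ) → v i ∉ C}
        = ⋂ (i : Fin (n+1)) (_ : 1 ≤ (i:ℕ)), (fun v : Fin (n+1) → 𝓧 => v i) ⁻¹' Cᶜ := by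
      ext v
      simp only [Set.mem_setOf_eq, Set.mem_iInter, Set.mem_preimage, Set.mem_compl_iff]
    rw [this]
    exact MeasurableSet.iInter fun i => MeasurableSet.iInter fun _ =>
      (measurable_pi_apply i) hC.compl
  · ext ω
    simp only [Set.mem_preimage, Set.mem_setOf_eq, Aset]
    constructor
    · intro h i h1 h2
      exact h ⟨i, Nat.lt_succ_of_le h2⟩ h1
    · intro h i h1
      exact h (i:ℕ) h1 (Nat.lt_succ_iff.mp i.isLt)

lemma lt_returnTime_iff {C : Set 𝓧} {ω : ℕ → 𝓧} {n : ℕ} :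
    ((n : ℕ∞) < returnTime C ω) ↔ ω ∈ Aset C n := by
  constructor
  · intro h i h1 h2
    intro hiC
    have hle : returnTime C ω ≤ (i : ℕ∞) :=
      iInf_le_of_le i (iInf_le _ ⟨h1, hiC⟩)
    have hlt : (n : ℕ∞) < (i : ℕ∞) := lt_of_lt_of_le h hle
    have := Nat.cast_lt.mp hlt
    omega
  · intro h
    have h1 : ((n + 1 : ℕ) : ℕ∞) ≤ returnTime C ω := by
      refine le_iInf fun i => le_iInf fun hi => ?_
      rw [Nat.cast_le]
      by_contra hcon
      push_neg at hcon
      exact h i hi.1 (by omega) hi.2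
    exact lt_of_lt_of_le (Nat.cast_lt.mpr (Nat.lt_succ_self n)) h1

lemma lintegral_coord_zero_le {x : 𝓧} (ν : Measure (ℕ → 𝓧)) [IsProbabilityMeasure ν]
    (h : ν {ω | ω 0 = x} = 1) {φ : 𝓧 → ℝ≥0∞} (hφ : Measurable φ) :
    ∫⁻ ω, φ (ω 0) ∂ν ≤ φ x := by
  set E : Set (ℕ → 𝓧) := (fun ω : ℕ → 𝓧 => ω 0) ⁻¹' {z | φ z ≤ φ x} with hE
  have hEm : MeasurableSet E :=
    (measurable_pi_apply 0) (measurableSet_le hφ measurable_const)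
  have hsub : {ω : ℕ → 𝓧 | ω 0 = x} ⊆ E := by
    intro ω hω
    simp only [hE, Set.mem_preimage, Set.mem_setOf_eq]
    rw [show ω 0 = x from hω]
  have hE1 : ν E = 1 := le_antisymm prob_le_one (h ▸ measure_mono hsub)
  have hEc : ν Eᶜ = 0 := by
    have := measure_compl hEm (measure_ne_top ν E)
    rw [hE1, measure_univ] at this
    simpa using this
  calc ∫⁻ ω, φ (ω 0) ∂ν
      = ∫⁻ ω in E, φ (ω 0) ∂ν + ∫⁻ ω in Eᶜ, φ (ω 0) ∂ν :=
        (lintegral_add_compl _ hEm).symm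
    _ ≤ φ x * ν E + 0 := by
        refine add_le_add ?_ (le_of_eq (setLIntegral_measure_zero _ _ hEc))
        calc ∫⁻ ω in E, φ (ω 0) ∂ν ≤ ∫⁻ _ in E, φ x ∂ν :=
              setLIntegral_mono measurable_const (fun ω hω => hω)
          _ = φ x * ν E := setLIntegral_const E (φ x)
    _ = φ x := by rw [hE1, mul_one, add_zero]

open ProbabilityTheory in
lemma comparison (P : Kernel 𝓧 𝓧) [IsMarkovKernel P]
    (μ : 𝓧 → Measure (ℕ → 𝓧)) (hμ : IsMarkovTrajectory P μ)
    (C : Set 𝓧) (hC : MeasurableSet C)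
    (W g : ℕ → 𝓧 → ℝ≥0∞) (hW : ∀ n, Measurable (W n)) (hg : ∀ n, Measurable (g n))
    (B : ℝ≥0∞)
    (H1 : ∀ n x, 1 ≤ n → x ∉ C → ∫⁻ y, W (n+1) y ∂(P x) + g n x ≤ W n x)
    (H2 : ∀ x, ∫⁻ y, W 1 y ∂(P x) + g 0 x ≤ W 0 x + B)
    (x : 𝓧) :
    ∑' n, ∫⁻ ω in Aset C n, g n (ω n) ∂(μ x) ≤ W 0 x + B := by
  obtain ⟨hprob, hinit, hmarkov⟩ := hμ
  haveI := hprob x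
  have hWker : ∀ n, Measurable fun z : 𝓧 => ∫⁻ y, W n y ∂(P z) := fun n =>
    Measurable.lintegral_kernel_prod_right' ((hW n).comp measurable_snd)
  have key : ∀ N : ℕ,
      (∫⁻ ω in Aset C N, W N (ω N) ∂(μ x))
        + ∑ n ∈ Finset.range N, ∫⁻ ω in Aset C n, g n (ω n) ∂(μ x) ≤ W 0 x + B := by
    intro N
    induction N with
    | zero =>
      simp only [Finset.range_zero, Finset.sum_empty, add_zero, Aset_zero,
        Measure.restrict_univ]
      exact le_trans (lintegral_coord_zero_le (μ x) (hinit x) (hW 0)) le_self_add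
    | succ N ih =>
      rw [Finset.sum_range_succ]
      have hmk := hmarkov x N (Aset C N) (filt_Aset C hC N) (W (N+1)) (hW (N+1))
      have hmono : ∫⁻ ω in Aset C (N+1), W (N+1) (ω (N+1)) ∂(μ x)
          ≤ ∫⁻ ω in Aset C N, W (N+1) (ω (N+1)) ∂(μ x) :=
        lintegral_mono_set (Aset_succ_subset C N)
      rcases Nat.eq_zero_or_pos N with hN | hN
      · subst hN
        have e1 : ∫⁻ ω in Aset C 1, W 1 (ω 1) ∂(μ x)
            + ∫⁻ ω in Aset C 0, g 0 (ω 0) ∂(μ x) ≤ W 0 x + B := by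
          calc ∫⁻ ω in Aset C 1, W 1 (ω 1) ∂(μ x) + ∫⁻ ω in Aset C 0, g 0 (ω 0) ∂(μ x)
              ≤ ∫⁻ ω in Aset C 0, W 1 (ω 1) ∂(μ x)
                + ∫⁻ ω in Aset C 0, g 0 (ω 0) ∂(μ x) := add_le_add_left hmono _
            _ = ∫⁻ ω in Aset C 0, (∫⁻ y, W 1 y ∂(P (ω 0))) ∂(μ x)
                + ∫⁻ ω in Aset C 0, g 0 (ω 0) ∂(μ x) := by rw [hmk]
            _ = ∫⁻ ω in Aset C 0,
                  ((∫⁻ y, W 1 y ∂(P (ω 0))) + g 0 (ω 0)) ∂(μ x) := by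
                have hme : Measurable fun ω : ℕ → 𝓧 => ∫⁻ y, W 1 y ∂(P (ω 0)) :=
                  (hWker 1).comp (measurable_pi_apply 0)
                rw [← lintegral_add_left hme]
            _ = ∫⁻ ω, ((∫⁻ y, W 1 y ∂(P (ω 0))) + g 0 (ω 0)) ∂(μ x) := by
                rw [Aset_zero, Measure.restrict_univ]
            _ ≤ ∫⁻ y, W 1 y ∂(P x) + g 0 x :=
                lintegral_coord_zero_le (μ x) (hinit x) ((hWker 1).add (hg 0))
            _ ≤ W 0 x + B := H2 x
        simpa using e1
      · have hstep : ∫⁻ ω in Aset C (N+1), W (N+1) (ω (N+1)) ∂(μ x)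
            + ∫⁻ ω in Aset C N, g N (ω N) ∂(μ x)
            ≤ ∫⁻ ω in Aset C N, W N (ω N) ∂(μ x) := by
          calc ∫⁻ ω in Aset C (N+1), W (N+1) (ω (N+1)) ∂(μ x)
                + ∫⁻ ω in Aset C N, g N (ω N) ∂(μ x)
              ≤ ∫⁻ ω in Aset C N, W (N+1) (ω (N+1)) ∂(μ x)
                + ∫⁻ ω in Aset C N, g N (ω N) ∂(μ x) := add_le_add_left hmono _
            _ = ∫⁻ ω in Aset C N, (∫⁻ y, W (N+1) y ∂(P (ω N))) ∂(μ x)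
                + ∫⁻ ω in Aset C N, g N (ω N) ∂(μ x) := by rw [hmk]
            _ = ∫⁻ ω in Aset C N,
                  ((∫⁻ y, W (N+1) y ∂(P (ω N))) + g N (ω N)) ∂(μ x) := by
                have hme : Measurable fun ω : ℕ → 𝓧 => ∫⁻ y, W (N+1) y ∂(P (ω N)) :=
                  (hWker (N+1)).comp (measurable_pi_apply N)
                rw [← lintegral_add_left hme]
            _ ≤ ∫⁻ ω in Aset C N, W N (ω N) ∂(μ x) := by
                refine setLIntegral_mono ((hW N).comp (measurable_pi_apply N)) ?_
                intro ω hω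
                exact H1 N (ω N) hN (hω N hN (le_refl N))
        calc ∫⁻ ω in Aset C (N+1), W (N+1) (ω (N+1)) ∂(μ x)
              + (∑ n ∈ Finset.range N, ∫⁻ ω in Aset C n, g n (ω n) ∂(μ x)
                + ∫⁻ ω in Aset C N, g N (ω N) ∂(μ x))
            = (∫⁻ ω in Aset C (N+1), W (N+1) (ω (N+1)) ∂(μ x)
              + ∫⁻ ω in Aset C N, g N (ω N) ∂(μ x))
              + ∑ n ∈ Finset.range N, ∫⁻ ω in Aset C n, g n (ω n) ∂(μ x) := by ring
          _ ≤ ∫⁻ ω in Aset C N, W N (ω N) ∂(μ x)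
              + ∑ n ∈ Finset.range N, ∫⁻ ω in Aset C n, g n (ω n) ∂(μ x) :=
              add_le_add_left hstep _
          _ ≤ W 0 x + B := ih
  refine ENNReal.tsum_le_of_sum_range_le (fun N => ?_)
  exact le_trans le_add_self (key N)

end Comparison
set_option maxHeartbeats 2000000 in
/-- Suppose the Markov kernel `P` satisfies PE(V, c, α, b, C) and let
`ρ ∈ [1, 1/(1−α)]`.  With `V_ρ(x) = V(x)^{1−ρ(1−α)}` and `r_ρ(n) = (n+1)^{ρ−1}`, there
is a constant `M < ∞` such that for all `x`,
`𝔼_x[ Σ_{n=0}^{τ_C − 1} r_ρ(n)·V_ρ(X_n) ] ≤ M·V(x)`. -/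
theorem stmt_4 {𝓧 : Type*} [MeasurableSpace 𝓧]
    (P : ProbabilityTheory.Kernel 𝓧 𝓧) [ProbabilityTheory.IsMarkovKernel P]
    (μ : 𝓧 → Measure (ℕ → 𝓧)) (hμ : IsMarkovTrajectory P μ)
    (V : 𝓧 → ℝ) (hVmeas : Measurable V) (hV1 : ∀ x, 1 ≤ V x)
    (c α b : ℝ) (hα : α ∈ Set.Ioo (0 : ℝ) 1) (hc : 0 < c) (hb : 0 < b)
    (C : Set 𝓧) (hC : MeasurableSet C) (hVC : ∃ K : ℝ, ∀ x ∈ C, V x ≤ K)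
    (hPE : ∀ x, ∫⁻ y, ENNReal.ofReal (V y) ∂(P x)
      ≤ ENNReal.ofReal (V x - c * V x ^ α + C.indicator (fun _ => b) x))
    (ρ : ℝ) (hρ : ρ ∈ Set.Icc (1 : ℝ) (1 / (1 - α))) :
    ∃ M : ℝ, 0 ≤ M ∧
      ∀ x, ∫⁻ ω, (∑' n : ℕ,
          Set.indicator {k : ℕ | (k : ℕ∞) < returnTime C ω}
            (fun k => ENNReal.ofReal (((k : ℝ) + 1) ^ (ρ - 1)
              * V (ω k) ^ (1 - ρ * (1 - α)))) n) ∂(μ x)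
        ≤ ENNReal.ofReal (M * V x) := by
  classical
  obtain ⟨hα0, hα1⟩ := hα
  obtain ⟨hρlo, hρhi⟩ := hρ
  obtain ⟨K, hK⟩ := hVC
  -- constants
  set γ : ℝ := 1 - α with hγdef
  have hγ0 : 0 < γ := by rw [hγdef]; linarith
  have hγ1 : γ < 1 := by rw [hγdef]; linarith
  set ρ₀ : ℝ := 1 / γ with hρ₀def
  have hρ₀1 : 1 ≤ ρ₀ := one_le_rho hγ0 hγ1 hρ₀def
  have hρ₀m1 : 0 ≤ ρ₀ - 1 := by linarith
  set s : ℝ := c * γ / 2 with hsdef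
  have hs0 : 0 < s := by rw [hsdef]; exact div_pos (mul_pos hc hγ0) two_pos
  set m : ℝ := min s 1 with hmdef
  have hm0 : 0 < m := by rw [hmdef]; exact lt_min hs0 one_pos
  have hmpow0 : (0:ℝ) < m ^ (ρ₀ - 1) := Real.rpow_pos_of_pos hm0 _
  set d : ℝ := 1 / (s * m ^ (ρ₀ - 1)) with hddef
  have hd0 : 0 < d := by rw [hddef]; exact one_div_pos.mpr (mul_pos hs0 hmpow0)
  set c' : ℝ := min c 1 with hc'def
  have hc'0 : 0 < c' := by rw [hc'def]; exact lt_min hc one_pos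
  have hc'c : c' ≤ c := by rw [hc'def]; exact min_le_left _ _
  set K' : ℝ := max K 1 with hK'def
  have hK'1 : (1:ℝ) ≤ K' := by rw [hK'def]; exact le_max_right _ _
  set B₀ : ℝ := d * (s + (K' + b) ^ γ) ^ ρ₀ with hB₀def
  have hKb : (0:ℝ) ≤ K' + b := by linarith
  have hpow0 : (0:ℝ) ≤ (s + (K' + b) ^ γ) ^ ρ₀ :=
    Real.rpow_nonneg (add_nonneg hs0.le (Real.rpow_nonneg hKb _)) _
  have hB₀0 : 0 ≤ B₀ := by rw [hB₀def]; exact mul_nonneg hd0.le hpow0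
  set M : ℝ := d + (B₀ + 1) + 1 / c' + b / c' with hMdef
  have hM0 : 0 ≤ M := by
    rw [hMdef]
    have h1 : (0:ℝ) ≤ 1 / c' := (div_nonneg zero_le_one hc'0.le)
    have h2 : (0:ℝ) ≤ b / c' := (div_nonneg hb.le hc'0.le)
    linarith [hd0.le, hB₀0]
  refine ⟨M, hM0, fun x => ?_⟩
  -- basic facts from the drift condition
  have hone : ∀ z, (1:ℝ≥0∞) ≤ ∫⁻ y, ENNReal.ofReal (V y) ∂(P z) := by
    intro z
    calc (1:ℝ≥0∞) = ∫⁻ _, 1 ∂(P z) := by rw [lintegral_one, measure_univ]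
      _ ≤ ∫⁻ y, ENNReal.ofReal (V y) ∂(P z) :=
          lintegral_mono fun y => ENNReal.one_le_ofReal.mpr (hV1 y)
  have hfact : ∀ z, 1 ≤ V z - c * V z ^ α + C.indicator (fun _ => b) z := fun z =>
    ENNReal.one_le_ofReal.mp (le_trans (hone z) (hPE z))
  have hfactC : ∀ z, z ∉ C → 1 ≤ V z - c * V z ^ α := by
    intro z hz
    have := hfact z
    rwa [Set.indicator_of_notMem hz, add_zero] at this
  have hVα0 : ∀ z, (0:ℝ) ≤ V z ^ α := fun z =>
    Real.rpow_nonneg (by linarith [hV1 z]) _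
  -- the drift functions
  set W_B : ℕ → 𝓧 → ℝ≥0∞ :=
    fun n z => ENNReal.ofReal (d * (s * (n:ℝ) + (V z) ^ γ) ^ ρ₀) with hWBdef
  set g_B : ℕ → 𝓧 → ℝ≥0∞ :=
    fun n _ => ENNReal.ofReal (((n:ℝ) + 1) ^ (ρ₀ - 1)) with hgBdef
  set W_A : ℕ → 𝓧 → ℝ≥0∞ := fun _ z => ENNReal.ofReal (V z / c') with hWAdef
  set g_A : ℕ → 𝓧 → ℝ≥0∞ := fun _ z => ENNReal.ofReal ((V z) ^ α) with hgAdef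
  have hmVγ : Measurable fun z => (V z) ^ γ :=
    (Real.continuous_rpow_const hγ0.le).measurable.comp hVmeas
  have hmWB : ∀ n, Measurable (W_B n) := by
    intro n
    apply Measurable.ennreal_ofReal
    exact ((Real.continuous_rpow_const (by linarith : (0:ℝ) ≤ ρ₀)).measurable.comp
      (hmVγ.const_add (s * (n:ℝ)))).const_mul d
  have hmgB : ∀ n, Measurable (g_B n) := fun n => measurable_const
  have hmWA : ∀ n, Measurable (W_A n) := fun n =>
    (hVmeas.div_const c').ennreal_ofReal
  have hmgA : ∀ n, Measurable (g_A n) := fun n =>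
    ((Real.continuous_rpow_const hα0.le).measurable.comp hVmeas).ennreal_ofReal
  -- B-side drift, off C
  have hB1 : ∀ (n : ℕ) z, z ∉ C →
      ∫⁻ y, W_B (n+1) y ∂(P z) + g_B n z ≤ W_B n z := by
    intro n z hz
    have hcast : ((n+1:ℕ):ℝ) = (n:ℝ) + 1 := by push_cast; ring
    have hu : 1 ≤ V z - c * V z ^ α := hfactC z hz
    have hn1 : (0:ℝ) ≤ (n:ℝ) + 1 := by positivity
    have hsn : (0:ℝ) ≤ s * ((n:ℝ) + 1) := mul_nonneg hs0.le hn1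
    have hint : ∫⁻ y, ENNReal.ofReal (V y) ∂(P z)
        ≤ ENNReal.ofReal (V z - c * V z ^ α) := by
      have := hPE z
      rwa [Set.indicator_of_notMem hz, add_zero] at this
    have h1 : ∫⁻ y, W_B (n+1) y ∂(P z)
        ≤ ENNReal.ofReal (d * (s * ((n:ℝ) + 1) + (V z - c * V z ^ α) ^ γ) ^ ρ₀) := by
      have hk := B_key P V hVmeas hV1 hγ0 hγ1 hρ₀def hd0.le
        (a := s * ((n:ℝ) + 1)) hsn hu z hint
      simp only [hWBdef, hcast]
      exact hk
    have h2 := drift_arith hα0 hα1 hγdef hρ₀def hc hsdef hmdef hddef (hV1 z) hu n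
    calc ∫⁻ y, W_B (n+1) y ∂(P z) + g_B n z
        ≤ ENNReal.ofReal (d * (s * ((n:ℝ) + 1) + (V z - c * V z ^ α) ^ γ) ^ ρ₀)
          + ENNReal.ofReal (((n:ℝ) + 1) ^ (ρ₀ - 1)) := add_le_add h1 (le_refl _)
      _ = ENNReal.ofReal (d * (s * ((n:ℝ) + 1) + (V z - c * V z ^ α) ^ γ) ^ ρ₀
          + ((n:ℝ) + 1) ^ (ρ₀ - 1)) := by
          rw [ENNReal.ofReal_add
            (mul_nonneg hd0.le (Real.rpow_nonneg
              (add_nonneg hsn (Real.rpow_nonneg (by linarith) _)) _))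
            (Real.rpow_nonneg hn1 _)]
      _ ≤ ENNReal.ofReal (d * (s * (n:ℝ) + (V z) ^ γ) ^ ρ₀) :=
          ENNReal.ofReal_le_ofReal h2
  -- B-side initial bound (all z)
  have hB2 : ∀ z, ∫⁻ y, W_B 1 y ∂(P z) + g_B 0 z
      ≤ W_B 0 z + ENNReal.ofReal (B₀ + 1) := by
    intro z
    by_cases hz : z ∈ C
    · have hu : 1 ≤ V z - c * V z ^ α + b := by
        have := hfact z
        rwa [Set.indicator_of_mem hz] at this
      have hint : ∫⁻ y, ENNReal.ofReal (V y) ∂(P z)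
          ≤ ENNReal.ofReal (V z - c * V z ^ α + b) := by
        have := hPE z
        rwa [Set.indicator_of_mem hz] at this
      have h1 : ∫⁻ y, W_B 1 y ∂(P z)
          ≤ ENNReal.ofReal (d * (s + (V z - c * V z ^ α + b) ^ γ) ^ ρ₀) := by
        have hk := B_key P V hVmeas hV1 hγ0 hγ1 hρ₀def hd0.le
          (a := s) hs0.le hu z hint
        have e : ∀ y:𝓧, W_B 1 y = ENNReal.ofReal (d * (s + (V y) ^ γ) ^ ρ₀) := by
          intro y; simp only [hWBdef, Nat.cast_one, mul_one]
        simp only [e]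
        exact hk
      have hle : d * (s + (V z - c * V z ^ α + b) ^ γ) ^ ρ₀ ≤ B₀ := by
        rw [hB₀def]
        have hVz : V z ≤ K' := le_trans (hK z hz) (by rw [hK'def]; exact le_max_left _ _)
        have hcv : 0 ≤ c * V z ^ α := mul_nonneg hc.le (hVα0 z)
        have h3 : (V z - c * V z ^ α + b) ^ γ ≤ (K' + b) ^ γ :=
          Real.rpow_le_rpow (by linarith) (by linarith) hγ0.le
        have h4 : (s + (V z - c * V z ^ α + b) ^ γ) ^ ρ₀ ≤ (s + (K' + b) ^ γ) ^ ρ₀ :=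
          Real.rpow_le_rpow
            (add_nonneg hs0.le (Real.rpow_nonneg (by linarith) _))
            (by linarith) (by linarith)
        exact mul_le_mul_of_nonneg_left h4 hd0.le
      have hgB0 : g_B 0 z = ENNReal.ofReal 1 := by
        simp only [hgBdef, Nat.cast_zero, zero_add, Real.one_rpow]
      calc ∫⁻ y, W_B 1 y ∂(P z) + g_B 0 z
          ≤ ENNReal.ofReal B₀ + ENNReal.ofReal 1 := by
            refine add_le_add (le_trans h1 (ENNReal.ofReal_le_ofReal hle)) ?_
            rw [hgB0]
        _ = ENNReal.ofReal (B₀ + 1) := by rw [← ENNReal.ofReal_add hB₀0 zero_le_one]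
        _ ≤ W_B 0 z + ENNReal.ofReal (B₀ + 1) := le_add_self
    · exact le_trans (hB1 0 z hz) le_self_add
  -- A-side integral bound
  have hAint : ∀ z, ∫⁻ y, W_A 1 y ∂(P z)
      ≤ ENNReal.ofReal ((V z - c * V z ^ α + C.indicator (fun _ => b) z) / c') := by
    intro z
    have e : (fun y:𝓧 => W_A 1 y)
        = fun y => ENNReal.ofReal (V y) * ENNReal.ofReal (1/c') := by
      funext y
      simp only [hWAdef]
      rw [← ENNReal.ofReal_mul (by linarith [hV1 y] : (0:ℝ) ≤ V y)]
      congr 1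
      field_simp
    rw [e, lintegral_mul_const _ hVmeas.ennreal_ofReal]
    calc (∫⁻ y, ENNReal.ofReal (V y) ∂(P z)) * ENNReal.ofReal (1/c')
        ≤ ENNReal.ofReal (V z - c * V z ^ α + C.indicator (fun _ => b) z)
          * ENNReal.ofReal (1/c') := mul_le_mul_left (hPE z) _
      _ = ENNReal.ofReal ((V z - c * V z ^ α + C.indicator (fun _ => b) z) / c') := by
          rw [← ENNReal.ofReal_mul (by linarith [hfact z] :
            (0:ℝ) ≤ V z - c * V z ^ α + C.indicator (fun _ => b) z)]
          congr 1
          field_simp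
  -- A-side drift, off C
  have hA1 : ∀ (n : ℕ) z, z ∉ C →
      ∫⁻ y, W_A (n+1) y ∂(P z) + g_A n z ≤ W_A n z := by
    intro n z hz
    have hu : 1 ≤ V z - c * V z ^ α := hfactC z hz
    have hdiv0 : (0:ℝ) ≤ (V z - c * V z ^ α) / c' := div_nonneg (by linarith) hc'0.le
    have hreal : (V z - c * V z ^ α) / c' + V z ^ α ≤ V z / c' := by
      rw [div_add' _ _ _ hc'0.ne']
      refine (div_le_div_iff_of_pos_right hc'0).mpr ?_
      nlinarith [mul_nonneg (sub_nonneg.mpr hc'c) (hVα0 z)]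
    have h1 : ∫⁻ y, W_A (n+1) y ∂(P z)
        ≤ ENNReal.ofReal ((V z - c * V z ^ α) / c') := by
      have := hAint z
      rwa [Set.indicator_of_notMem hz, add_zero] at this
    calc ∫⁻ y, W_A (n+1) y ∂(P z) + g_A n z
        ≤ ENNReal.ofReal ((V z - c * V z ^ α) / c') + ENNReal.ofReal (V z ^ α) :=
          add_le_add h1 (le_refl _)
      _ = ENNReal.ofReal ((V z - c * V z ^ α) / c' + V z ^ α) := by
          rw [ENNReal.ofReal_add hdiv0 (hVα0 z)]
      _ ≤ W_A n z := ENNReal.ofReal_le_ofReal hreal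
  -- A-side initial bound (all z)
  have hA2 : ∀ z, ∫⁻ y, W_A 1 y ∂(P z) + g_A 0 z
      ≤ W_A 0 z + ENNReal.ofReal (b / c') := by
    intro z
    have hindb : C.indicator (fun _ => b) z ≤ b := by
      rw [Set.indicator_apply]; split_ifs <;> simp [hb.le]
    have hu1 : (1:ℝ) ≤ V z - c * V z ^ α + C.indicator (fun _ => b) z := hfact z
    have hdiv0 : (0:ℝ) ≤ (V z - c * V z ^ α + C.indicator (fun _ => b) z) / c' :=
      div_nonneg (by linarith) hc'0.le
    have hreal : (V z - c * V z ^ α + C.indicator (fun _ => b) z) / c' + V z ^ α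
        ≤ V z / c' + b / c' := by
      rw [div_add' _ _ _ hc'0.ne', ← add_div]
      refine (div_le_div_iff_of_pos_right hc'0).mpr ?_
      nlinarith [mul_nonneg (sub_nonneg.mpr hc'c) (hVα0 z), hindb]
    calc ∫⁻ y, W_A 1 y ∂(P z) + g_A 0 z
        ≤ ENNReal.ofReal ((V z - c * V z ^ α + C.indicator (fun _ => b) z) / c')
          + ENNReal.ofReal (V z ^ α) := add_le_add (hAint z) (le_refl _)
      _ = ENNReal.ofReal ((V z - c * V z ^ α + C.indicator (fun _ => b) z) / c'
          + V z ^ α) := by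
          rw [ENNReal.ofReal_add hdiv0 (hVα0 z)]
      _ ≤ ENNReal.ofReal (V z / c' + b / c') := ENNReal.ofReal_le_ofReal hreal
      _ = W_A 0 z + ENNReal.ofReal (b / c') := by
          simp only [hWAdef]
          rw [ENNReal.ofReal_add (div_nonneg (by linarith [hV1 z]) hc'0.le)
            (div_nonneg hb.le hc'0.le)]
  -- the two comparison bounds
  have hcompB := comparison P μ hμ C hC W_B g_B hmWB hmgB (ENNReal.ofReal (B₀ + 1))
    (fun n z _ hz => hB1 n z hz) hB2 x
  have hcompA := comparison P μ hμ C hC W_A g_A hmWA hmgA (ENNReal.ofReal (b / c'))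
    (fun n z _ hz => hA1 n z hz) hA2 x
  -- Young's inequality, pointwise
  have hρ₀hi : ρ ≤ ρ₀ := hρhi
  have hYoung : ∀ (k : ℕ) (w : ℝ), 1 ≤ w →
      ENNReal.ofReal (((k:ℝ) + 1) ^ (ρ - 1) * w ^ (1 - ρ * γ))
        ≤ ENNReal.ofReal (((k:ℝ) + 1) ^ (ρ₀ - 1)) + ENNReal.ofReal (w ^ α) := by
    intro k w hw
    have hw0 : (0:ℝ) < w := lt_of_lt_of_le one_pos hw
    have hk0 : (0:ℝ) ≤ (k:ℝ) + 1 := by positivity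
    set θ : ℝ := (ρ - 1) * γ / α with hθdef
    have hθ0 : 0 ≤ θ := by
      rw [hθdef]
      exact div_nonneg (mul_nonneg (by linarith) hγ0.le) hα0.le
    have hργ : ρ * γ ≤ 1 := by
      have h1 : ρ * γ ≤ ρ₀ * γ := mul_le_mul_of_nonneg_right hρ₀hi hγ0.le
      have h2 : ρ₀ * γ = 1 := by rw [hρ₀def]; field_simp
      linarith
    have hθ1 : θ ≤ 1 := by
      rw [hθdef, div_le_one hα0, hγdef]
      nlinarith [hργ, hγdef]
    have hA0 : (0:ℝ) ≤ ((k:ℝ) + 1) ^ (ρ₀ - 1) := Real.rpow_nonneg hk0 _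
    have hB0 : (0:ℝ) ≤ w ^ α := Real.rpow_nonneg hw0.le _
    have e1 : (((k:ℝ) + 1) ^ (ρ₀ - 1)) ^ θ = ((k:ℝ) + 1) ^ (ρ - 1) := by
      rw [← Real.rpow_mul hk0]
      congr 1
      rw [hθdef, hρ₀def, hγdef]
      field_simp
      ring
    have e2 : (w ^ α) ^ (1 - θ) = w ^ (1 - ρ * γ) := by
      rw [← Real.rpow_mul hw0.le]
      congr 1
      rw [hθdef, hγdef]
      field_simp
      ring
    have hgm := Real.geom_mean_le_arith_mean2_weighted hθ0 (by linarith : (0:ℝ) ≤ 1 - θ)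
      hA0 hB0 (by ring : θ + (1 - θ) = 1)
    have hreal : ((k:ℝ) + 1) ^ (ρ - 1) * w ^ (1 - ρ * γ)
        ≤ ((k:ℝ) + 1) ^ (ρ₀ - 1) + w ^ α := by
      rw [← e1, ← e2]
      nlinarith [hgm, mul_nonneg hθ0 hB0, mul_nonneg (sub_nonneg.mpr hθ1) hA0]
    exact le_trans (ENNReal.ofReal_le_ofReal hreal)
      (le_of_eq (ENNReal.ofReal_add hA0 hB0))
  -- assemble
  have hptwise : ∀ (ω : ℕ → 𝓧) (n : ℕ),
      Set.indicator {k : ℕ | (k : ℕ∞) < returnTime C ω}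
        (fun k => ENNReal.ofReal (((k : ℝ) + 1) ^ (ρ - 1)
          * V (ω k) ^ (1 - ρ * γ))) n
      ≤ (Aset C n).indicator (fun ω' => g_B n (ω' n)) ω
        + (Aset C n).indicator (fun ω' => g_A n (ω' n)) ω := by
    intro ω n
    by_cases h : (n : ℕ∞) < returnTime C ω
    · have hmem : ω ∈ Aset C n := lt_returnTime_iff.mp h
      rw [Set.indicator_of_mem (show n ∈ {k : ℕ | (k : ℕ∞) < returnTime C ω} from h),
        Set.indicator_of_mem hmem, Set.indicator_of_mem hmem]
      exact hYoung n (V (ω n)) (hV1 _)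
    · rw [Set.indicator_of_notMem
        (show n ∉ {k : ℕ | (k : ℕ∞) < returnTime C ω} from h)]
      exact zero_le
  have hmB : ∀ n : ℕ, Measurable fun ω : ℕ → 𝓧 =>
      (Aset C n).indicator (fun ω' => g_B n (ω' n)) ω := fun n =>
    ((hmgB n).comp (measurable_pi_apply n)).indicator (measurable_Aset C hC n)
  have hmA : ∀ n : ℕ, Measurable fun ω : ℕ → 𝓧 =>
      (Aset C n).indicator (fun ω' => g_A n (ω' n)) ω := fun n =>
    ((hmgA n).comp (measurable_pi_apply n)).indicator (measurable_Aset C hC n)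
  calc ∫⁻ ω, (∑' n : ℕ,
          Set.indicator {k : ℕ | (k : ℕ∞) < returnTime C ω}
            (fun k => ENNReal.ofReal (((k : ℝ) + 1) ^ (ρ - 1)
              * V (ω k) ^ (1 - ρ * γ))) n) ∂(μ x)
      ≤ ∫⁻ ω, (∑' n : ℕ, ((Aset C n).indicator (fun ω' => g_B n (ω' n)) ω
          + (Aset C n).indicator (fun ω' => g_A n (ω' n)) ω)) ∂(μ x) :=
        lintegral_mono fun ω =>
          Summable.tsum_le_tsum (hptwise ω) ENNReal.summable ENNReal.summable
    _ = ∫⁻ ω, ((∑' n : ℕ, (Aset C n).indicator (fun ω' => g_B n (ω' n)) ω)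
          + (∑' n : ℕ, (Aset C n).indicator (fun ω' => g_A n (ω' n)) ω)) ∂(μ x) := by
        apply lintegral_congr
        intro ω
        rw [ENNReal.tsum_add]
    _ = (∫⁻ ω, (∑' n : ℕ, (Aset C n).indicator (fun ω' => g_B n (ω' n)) ω) ∂(μ x))
        + (∫⁻ ω, (∑' n : ℕ, (Aset C n).indicator (fun ω' => g_A n (ω' n)) ω) ∂(μ x)) :=
        lintegral_add_left (Measurable.ennreal_tsum hmB) _
    _ = (∑' n : ℕ, ∫⁻ ω in Aset C n, g_B n (ω n) ∂(μ x))
        + (∑' n : ℕ, ∫⁻ ω in Aset C n, g_A n (ω n) ∂(μ x)) := by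
        rw [lintegral_tsum (fun n => (hmB n).aemeasurable),
          lintegral_tsum (fun n => (hmA n).aemeasurable)]
        congr 1
        · exact tsum_congr fun n => lintegral_indicator (measurable_Aset C hC n) _
        · exact tsum_congr fun n => lintegral_indicator (measurable_Aset C hC n) _
    _ ≤ (W_B 0 x + ENNReal.ofReal (B₀ + 1)) + (W_A 0 x + ENNReal.ofReal (b / c')) :=
        add_le_add hcompB hcompA
    _ ≤ ENNReal.ofReal (M * V x) := by
        have hVx0 : (0:ℝ) ≤ V x := by linarith [hV1 x]
        have hWB0 : W_B 0 x = ENNReal.ofReal (d * V x) := by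
          simp only [hWBdef, Nat.cast_zero, mul_zero, zero_add]
          congr 1
          rw [← Real.rpow_mul hVx0, hρ₀def, mul_one_div_cancel hγ0.ne', Real.rpow_one]
        have hWA0 : W_A 0 x = ENNReal.ofReal (V x / c') := by simp only [hWAdef]
        rw [hWB0, hWA0]
        have h1 : (0:ℝ) ≤ d * V x := mul_nonneg hd0.le hVx0
        have h2 : (0:ℝ) ≤ V x / c' := div_nonneg hVx0 hc'0.le
        have h3 : (0:ℝ) ≤ b / c' := div_nonneg hb.le hc'0.le
        rw [← ENNReal.ofReal_add h1 (by linarith [hB₀0] : (0:ℝ) ≤ B₀ + 1),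
          ← ENNReal.ofReal_add h2 h3,
          ← ENNReal.ofReal_add (by linarith : (0:ℝ) ≤ d * V x + (B₀ + 1))
            (by linarith : (0:ℝ) ≤ V x / c' + b / c')]
        apply ENNReal.ofReal_le_ofReal
        rw [hMdef]
        have e1 : V x / c' = (1 / c') * V x := by ring
        have e2 : (0:ℝ) ≤ (B₀ + 1) * (V x - 1) :=
          mul_nonneg (by linarith) (by linarith [hV1 x])
        have e3 : (0:ℝ) ≤ (b / c') * (V x - 1) :=
          mul_nonneg h3 (by linarith [hV1 x])
        nlinarith [e2, e3]
end

section
/- Let ν_U and ν_V be Borel probability measures on [1,∞) such that ν_U is stochastically dominated by ν_V, i.e. ν_U((u,∞)) ≤ ν_V((u,∞)) for all u ≥ 1. Suppose further that ν_U satisfies the minorization ν_U(E) ≥ β·ψ(E) for all Borel sets E ⊆ [1,∞), where β ∈ (0,1) and ψ is a Borel probability measure on [1,∞). Then there exists a Borel probability measure μ on [1,∞) such that μ stochastically dominates ψ (that is, ψ((u,∞)) ≤ μ((u,∞)) for all u ≥ 1) and β·μ(E) ≤ ν_V(E) for all Borel sets E ⊆ [1,∞). -/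
open MeasureTheory Set Filter Topology ENNReal

/-- Lemma 17: Let `ν_U, ν_V` be Borel probability measures on `[1,∞)` with
`ν_U` stochastically dominated by `ν_V`, and suppose `ν_U ≥ β·ψ` for some `β ∈ (0,1)` and
probability measure `ψ`.  Then there is a probability measure `μ` on `[1,∞)` which
stochastically dominates `ψ` and satisfies `β·μ ≤ ν_V`. -/
theorem stmt_7 (νU νV ψ : Measure ↥(Set.Ici (1 : ℝ)))
    [IsProbabilityMeasure νU] [IsProbabilityMeasure νV] [IsProbabilityMeasure ψ]
    (β : ℝ) (hβ : β ∈ Set.Ioo (0 : ℝ) 1)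
    (hdom : ∀ u : ℝ, 1 ≤ u →
      νU {y : ↥(Set.Ici (1 : ℝ)) | u < (y : ℝ)} ≤ νV {y : ↥(Set.Ici (1 : ℝ)) | u < (y : ℝ)})
    (hminor : ∀ E : Set ↥(Set.Ici (1 : ℝ)), MeasurableSet E →
      ENNReal.ofReal β * ψ E ≤ νU E) :
    ∃ μ : Measure ↥(Set.Ici (1 : ℝ)), IsProbabilityMeasure μ ∧
      (∀ u : ℝ, 1 ≤ u →
        ψ {y : ↥(Set.Ici (1 : ℝ)) | u < (y : ℝ)} ≤ μ {y : ↥(Set.Ici (1 : ℝ)) | u < (y : ℝ)}) ∧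
      (∀ E : Set ↥(Set.Ici (1 : ℝ)), MeasurableSet E →
        ENNReal.ofReal β * μ E ≤ νV E) := by
  classical
  obtain ⟨hβ0, hβ1⟩ := hβ
  set β' : ℝ≥0∞ := ENNReal.ofReal β with hβ'def
  have hb0 : β' ≠ 0 := (ENNReal.ofReal_pos.mpr hβ0).ne'
  have hbtop : β' ≠ ∞ := ENNReal.ofReal_ne_top
  have hble : β' ≤ 1 := ENNReal.ofReal_le_one.mpr hβ1.le
  set T : ℝ → Set ↥(Set.Ici (1 : ℝ)) := fun u => {y | u < (y : ℝ)} with hTdef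
  have hTm : ∀ u, MeasurableSet (T u) := fun u =>
    measurable_subtype_coe measurableSet_Ioi
  have hTanti : ∀ {u v : ℝ}, u ≤ v → T v ⊆ T u := fun h y hy => lt_of_le_of_lt h hy
  set S : Set ℝ := {u | 1 ≤ u ∧ νV (T u) ≤ β'} with hSdef
  -- S is nonempty since tail measures tend to 0
  have hSne : S.Nonempty := by
    have hIempty : (⋂ n : ℕ, T ((n : ℝ) + 1)) = ∅ := by
      ext y
      simp only [mem_iInter, mem_empty_iff_false, iff_false, not_forall]
      obtain ⟨n, hn⟩ := exists_nat_gt (y : ℝ)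
      exact ⟨n, fun h => absurd h (not_lt.mpr (le_trans (le_of_lt hn) (by linarith)))⟩
    have htend : Tendsto (fun n : ℕ => νV (T ((n : ℝ) + 1))) atTop
        (𝓝 (νV (⋂ n : ℕ, T ((n : ℝ) + 1)))) := by
      refine tendsto_measure_iInter_atTop (fun n => (hTm _).nullMeasurableSet) ?_
        ⟨0, measure_ne_top _ _⟩
      intro n m hnm
      exact hTanti (by exact_mod_cast by linarith [(Nat.cast_le (α := ℝ)).mpr hnm])
    rw [hIempty, measure_empty] at htend
    have hev := htend.eventually_lt_const (ENNReal.ofReal_pos.mpr hβ0)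
    obtain ⟨n, hn⟩ := hev.exists
    exact ⟨(n : ℝ) + 1, by have := Nat.cast_nonneg (α := ℝ) n; linarith, hn.le⟩
  have hSbdd : BddBelow S := ⟨1, fun u hu => hu.1⟩
  set a : ℝ := sInf S with hadef
  have ha1 : 1 ≤ a := le_csInf hSne fun u hu => hu.1
  -- Key fact 1: νV (T a) ≤ β'
  have hGa : νV (T a) ≤ β' := by
    have hUeq : T a = ⋃ n : ℕ, T (a + 1 / ((n : ℝ) + 1)) := by
      ext y
      simp only [mem_iUnion, hTdef, mem_setOf_eq]
      constructor
      · intro hy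
        obtain ⟨n, hn⟩ := exists_nat_one_div_lt (sub_pos.mpr hy)
        exact ⟨n, by linarith⟩
      · rintro ⟨n, hn⟩
        have : (0 : ℝ) < 1 / ((n : ℝ) + 1) := by positivity
        linarith
    have hmono : Monotone fun n : ℕ => T (a + 1 / ((n : ℝ) + 1)) := by
      intro n m hnm
      refine hTanti ?_
      have h1 : (1 : ℝ) / ((m : ℝ) + 1) ≤ 1 / ((n : ℝ) + 1) := by
        apply one_div_le_one_div_of_le (by positivity)
        exact_mod_cast by linarith [(Nat.cast_le (α := ℝ)).mpr hnm]
      linarith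
    have htend : Tendsto (fun n : ℕ => νV (T (a + 1 / ((n : ℝ) + 1)))) atTop
        (𝓝 (νV (⋃ n : ℕ, T (a + 1 / ((n : ℝ) + 1))))) :=
      tendsto_measure_iUnion_atTop hmono
    rw [← hUeq] at htend
    refine le_of_tendsto' htend fun n => ?_
    have hlt : sInf S < a + 1 / ((n : ℝ) + 1) := by
      have : (0 : ℝ) < 1 / ((n : ℝ) + 1) := by positivity
      linarith
    obtain ⟨u, huS, hu⟩ := exists_lt_of_csInf_lt hSne hlt
    exact le_trans (measure_mono (hTanti hu.le)) huS.2
  -- Key fact 2: β' ≤ νV {y | a ≤ y}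
  have hkey2 : β' ≤ νV {y : ↥(Set.Ici (1 : ℝ)) | a ≤ (y : ℝ)} := by
    have hIeq : {y : ↥(Set.Ici (1 : ℝ)) | a ≤ (y : ℝ)} = ⋂ n : ℕ, T (a - 1 / ((n : ℝ) + 1)) := by
      ext y
      simp only [mem_iInter, hTdef, mem_setOf_eq]
      constructor
      · intro hy n
        have : (0 : ℝ) < 1 / ((n : ℝ) + 1) := by positivity
        linarith
      · intro h
        by_contra hc
        push_neg at hc
        obtain ⟨n, hn⟩ := exists_nat_one_div_lt (sub_pos.mpr hc)
        have := h n
        linarith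
    have hanti : Antitone fun n : ℕ => T (a - 1 / ((n : ℝ) + 1)) := by
      intro n m hnm
      refine hTanti ?_
      have h1 : (1 : ℝ) / ((m : ℝ) + 1) ≤ 1 / ((n : ℝ) + 1) := by
        apply one_div_le_one_div_of_le (by positivity)
        exact_mod_cast by linarith [(Nat.cast_le (α := ℝ)).mpr hnm]
      linarith
    have htend : Tendsto (fun n : ℕ => νV (T (a - 1 / ((n : ℝ) + 1)))) atTop
        (𝓝 (νV (⋂ n : ℕ, T (a - 1 / ((n : ℝ) + 1))))) :=
      tendsto_measure_iInter_atTop (fun n => (hTm _).nullMeasurableSet) hanti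
        ⟨0, measure_ne_top _ _⟩
    rw [← hIeq] at htend
    refine ge_of_tendsto' htend fun n => ?_
    set u : ℝ := a - 1 / ((n : ℝ) + 1) with hudef
    have hua : u < a := by
      have : (0 : ℝ) < 1 / ((n : ℝ) + 1) := by positivity
      simp only [hudef]; linarith
    by_cases h1u : 1 ≤ u
    · have huS : u ∉ S := fun huS => absurd (csInf_le hSbdd huS) (not_le.mpr hua)
      have : ¬ νV (T u) ≤ β' := fun h => huS ⟨h1u, h⟩
      exact (not_le.mp this).le
    · have : T u = univ := by
        ext y
        simp only [hTdef, mem_setOf_eq, mem_univ, iff_true]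
        have := y.2
        simp only [mem_Ici] at this
        linarith [not_le.mp h1u]
      rw [this, measure_univ]
      exact hble
  -- The construction
  set pt : ↥(Set.Ici (1 : ℝ)) := ⟨a, ha1⟩ with hptdef
  set g : ℝ≥0∞ := νV (T a) with hgdef
  set k : ℝ≥0∞ := β'⁻¹ * g with hkdef
  have hk1 : k ≤ 1 := by
    calc k ≤ β'⁻¹ * β' := mul_le_mul_right hGa _
    _ = 1 := ENNReal.inv_mul_cancel hb0 hbtop
  set μ : Measure ↥(Set.Ici (1 : ℝ)) :=
    β'⁻¹ • νV.restrict (T a) + ((1 : ℝ≥0∞) - k) • Measure.dirac pt with hμdef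
  have hμapp : ∀ s : Set ↥(Set.Ici (1 : ℝ)), MeasurableSet s →
      μ s = β'⁻¹ * νV (s ∩ T a) + (1 - k) * (if pt ∈ s then 1 else 0) := by
    intro s hs
    simp [hμdef, Measure.restrict_apply hs, Measure.dirac_apply' _ hs, Set.indicator_apply]
  have hbinv : ∀ x : ℝ≥0∞, β' * (β'⁻¹ * x) = x := fun x => by
    rw [← mul_assoc, ENNReal.mul_inv_cancel hb0 hbtop, one_mul]
  have hptTa : pt ∉ T a := by simp [hTdef, hptdef]
  -- probability measure
  have hprob : IsProbabilityMeasure μ := by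
    constructor
    rw [hμapp univ MeasurableSet.univ]
    simp only [univ_inter, if_pos (mem_univ pt), mul_one]
    rw [← hgdef, ← hkdef]
    exact add_tsub_cancel_of_le hk1
  refine ⟨μ, hprob, ?_, ?_⟩
  · -- stochastic domination of ψ
    intro u hu
    by_cases h : a ≤ u
    · have hsub : T u ⊆ T a := hTanti h
      have hpt : pt ∉ T u := by
        simp only [hTdef, hptdef, mem_setOf_eq]
        exact not_lt.mpr h
      rw [show {y : ↥(Set.Ici (1 : ℝ)) | u < (y : ℝ)} = T u from rfl, hμapp (T u) (hTm u),
        inter_eq_self_of_subset_left hsub, if_neg hpt, mul_zero, add_zero]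
      have hre : ψ (T u) = β'⁻¹ * (β' * ψ (T u)) := by
        rw [← mul_assoc, ENNReal.inv_mul_cancel hb0 hbtop, one_mul]
      rw [hre]
      exact
          mul_le_mul_right (le_trans (hminor (T u) (hTm u)) (hdom u hu)) _
    · have hsub : T a ⊆ T u := hTanti (not_le.mp h).le
      have hpt : pt ∈ T u := by
        simp only [hTdef, hptdef, mem_setOf_eq]
        exact not_le.mp h
      rw [show {y : ↥(Set.Ici (1 : ℝ)) | u < (y : ℝ)} = T u from rfl, hμapp (T u) (hTm u),
        inter_eq_self_of_subset_right hsub, if_pos hpt, mul_one, ← hgdef, ← hkdef,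
        add_tsub_cancel_of_le hk1]
      exact prob_le_one
  · -- β·μ ≤ νV setwise
    intro E hE
    have hsplit : νV {y : ↥(Set.Ici (1 : ℝ)) | a ≤ (y : ℝ)} = νV {pt} + g := by
      have hset : {y : ↥(Set.Ici (1 : ℝ)) | a ≤ (y : ℝ)} = {pt} ∪ T a := by
        ext y
        simp only [hTdef, mem_setOf_eq, mem_union, mem_singleton_iff]
        constructor
        · intro hy
          rcases eq_or_lt_of_le hy with h | h
          · exact Or.inl (Subtype.ext h.symm)
          · exact Or.inr h
        · rintro (rfl | h)
          · rfl
          · exact h.le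
      rw [hset, measure_union (by simpa [disjoint_singleton_left] using hptTa) (hTm a)]
    have hmass : β' - g ≤ νV {pt} := by
      rw [tsub_le_iff_right]
      rw [← hsplit]
      exact hkey2
    have hc : β' * (1 - k) = β' - g := by
      have h2 : β' * k = g := hbinv g
      have h1 : β' * (1 - k) + g = β' := by
        rw [← h2, ← mul_add, tsub_add_cancel_of_le hk1, mul_one]
      exact ENNReal.eq_sub_of_add_eq (by rw [hgdef]; exact measure_ne_top _ _) h1
    rw [hμapp E hE, mul_add, hbinv, ← mul_assoc β' (1 - k), hc]
    by_cases hpE : pt ∈ E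
    · rw [if_pos hpE, mul_one]
      have h2 : νV (E ∩ T a) + (β' - g) ≤ νV (E ∩ T a) + νV {pt} :=
        add_le_add_right hmass _
      have h3 : νV (E ∩ T a) + νV {pt} = νV ((E ∩ T a) ∪ {pt}) := by
        rw [measure_union ?_ (measurableSet_singleton pt)]
        rw [disjoint_singleton_right]
        exact fun h => hptTa h.2
      have h4 : (E ∩ T a) ∪ {pt} ⊆ E :=
        union_subset inter_subset_left (singleton_subset_iff.mpr hpE)
      exact le_trans h2 (h3 ▸ measure_mono h4)
    · rw [if_neg hpE, mul_zero, add_zero]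
      exact measure_mono inter_subset_left
end

section
/- Suppose the Markov kernel P satisfies the weak drift condition PV ≤ V + b·1_C with b < ∞ and C = {x : V(x) ≤ d} a sublevel set, and suppose that for constants d' ≥ d, λ > 0, δ ∈ [0,1), β ∈ (0,1), b' < ∞ with log β < δ^{-1}·log(1−δ), the taming function F(z) = ⌈λz^δ⌉ for z > d', F(z) = 1 for z ≤ d', yields an F-subsampled kernel of P satisfying Q_F V ≤ βV + b'·1_{[V ≤ d']}. Let P̂ be another Markov kernel on 𝒳 with P̂(x,·) = P(x,·) for all x ∉ C, satisfying P̂V ≤ V + b̂·1_C for some b̂ < ∞. Then a taming function of the same form with the same λ and δ works for P̂: for every β̂ ∈ (β,1) there exist d̂ ≥ d' and b̂' < ∞ such that, with F̂(z) = ⌈λz^δ⌉ for z > d̂ and F̂(z) = 1 for z ≤ d̂, the F̂-subsampled kernel of P̂ satisfies Q_{F̂} V ≤ β̂·V + b̂'·1_{[V ≤ d̂]}. In particular, if every sublevel set of V is small for P̂ and β̂ is chosen with log β̂ < δ^{-1}·log(1−δ), then P̂ is tame with respect to V. -/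
open MeasureTheory ProbabilityTheory ENNReal Set

/-- `n`-fold composition power of a kernel. -/
noncomputable def kpow {𝓧 : Type*} [MeasurableSpace 𝓧]
    (P : ProbabilityTheory.Kernel 𝓧 𝓧) : ℕ → ProbabilityTheory.Kernel 𝓧 𝓧
  | 0 => ProbabilityTheory.Kernel.id
  | n + 1 => P.comp (kpow P n)

/-- The taming function `F(z) = ⌈λ z^δ⌉` for `z > d'` and `F(z) = 1` for `z ≤ d'`. -/
noncomputable def tamingF (lam δ d' : ℝ) (z : ℝ) : ℕ :=
  if z ≤ d' then 1 else ⌈lam * z ^ δ⌉₊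

/-- The bound `δ⁻¹·log(1−δ)`, interpreted as `−1` when `δ = 0`. -/
noncomputable def tameBound (δ : ℝ) : ℝ :=
  if δ = 0 then -1 else δ⁻¹ * Real.log (1 - δ)

/-- `C` is a small set for the kernel `P`: for some `m ≥ 1`, `ε ∈ (0,1]` and probability
measure `ν`, `P^m(x,E) ≥ ε·ν(E)` for all `x ∈ C` and measurable `E`. -/
def IsSmallSet {𝓧 : Type*} [MeasurableSpace 𝓧]
    (P : ProbabilityTheory.Kernel 𝓧 𝓧) (C : Set 𝓧) : Prop :=
  ∃ m : ℕ, 0 < m ∧ ∃ ε : ℝ, 0 < ε ∧ ε ≤ 1 ∧ ∃ ν : Measure 𝓧, IsProbabilityMeasure ν ∧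
    ∀ x ∈ C, ∀ E : Set 𝓧, MeasurableSet E → ENNReal.ofReal ε * ν E ≤ (kpow P m) x E

/-- The chain with kernel `P` is *tame* with respect to the scale function `V`. -/
def IsTame {𝓧 : Type*} [MeasurableSpace 𝓧]
    (P : ProbabilityTheory.Kernel 𝓧 𝓧) (V : 𝓧 → ℝ) : Prop :=
  ∃ d' : ℝ, 1 ≤ d' ∧ IsSmallSet P {x | V x ≤ d'} ∧
    ∃ lam : ℝ, 0 < lam ∧ ∃ δ ∈ Set.Ico (0 : ℝ) 1, ∃ β ∈ Set.Ioo (0 : ℝ) 1, ∃ b' : ℝ,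
      Real.log β < tameBound δ ∧
      ∀ x, ∫⁻ y, ENNReal.ofReal (V y) ∂((kpow P (tamingF lam δ d' (V x))) x)
        ≤ ENNReal.ofReal (β * V x + Set.indicator {x' | V x' ≤ d'} (fun _ => b') x)

section auxlemmas

variable {𝓧 : Type*} [MeasurableSpace 𝓧]

lemma kpow_markov (P : Kernel 𝓧 𝓧) [IsMarkovKernel P] (n : ℕ) :
    IsMarkovKernel (kpow P n) := by
  induction n with
  | zero => rw [kpow]; infer_instance
  | succ n ih => rw [kpow]; exact Kernel.IsMarkovKernel.comp _ _

lemma kpow_succ' (P : Kernel 𝓧 𝓧) [IsMarkovKernel P] (n : ℕ) :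
    kpow P (n + 1) = (kpow P n).comp P := by
  induction n with
  | zero => show P.comp Kernel.id = Kernel.id.comp P; rw [Kernel.comp_id, Kernel.id_comp]
  | succ n ih =>
    haveI := kpow_markov P n
    calc kpow P (n+2) = P ∘ₖ (kpow P n ∘ₖ P) := by
          rw [show kpow P (n+2) = P.comp (kpow P (n+1)) from rfl, ih]
      _ = (P ∘ₖ kpow P n) ∘ₖ P := (Kernel.comp_assoc P (kpow P n) P).symm
      _ = kpow P (n+1) ∘ₖ P := rfl

lemma lintegral_kpow_succ' (P : Kernel 𝓧 𝓧) [IsMarkovKernel P] (n : ℕ) (x : 𝓧)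
    {g : 𝓧 → ℝ≥0∞} (hg : Measurable g) :
    ∫⁻ y, g y ∂(kpow P (n + 1) x) = ∫⁻ z, (∫⁻ y, g y ∂(kpow P n z)) ∂(P x) := by
  haveI := kpow_markov P n
  rw [kpow_succ', Kernel.lintegral_comp _ _ _ hg]

lemma lintegral_kpow_zero (P : Kernel 𝓧 𝓧) (x : 𝓧) {g : 𝓧 → ℝ≥0∞} (hg : Measurable g) :
    ∫⁻ y, g y ∂(kpow P 0 x) = g x := by
  show ∫⁻ y, g y ∂(Kernel.id x) = g x
  rw [Kernel.id_apply, lintegral_dirac' _ hg]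

lemma kpow_one (P : Kernel 𝓧 𝓧) : kpow P 1 = P := by
  show P.comp (kpow P 0) = P
  show P.comp Kernel.id = P
  exact Kernel.comp_id P

end auxlemmas

/-- Corollary 20: tameness is preserved by modifying the chain on the small
set `C`, provided the modified chain still satisfies a weak drift condition; the same `λ`
and `δ` work, with any geometric rate `β̂ ∈ (β,1)`. -/
theorem stmt_9 {𝓧 : Type*} [MeasurableSpace 𝓧]
    (P : ProbabilityTheory.Kernel 𝓧 𝓧) [ProbabilityTheory.IsMarkovKernel P]
    (V : 𝓧 → ℝ) (hVmeas : Measurable V) (hV1 : ∀ x, 1 ≤ V x)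
    (b d : ℝ) (hb : 0 ≤ b) (C : Set 𝓧) (hCdef : C = {x | V x ≤ d})
    (hweak : ∀ x, ∫⁻ y, ENNReal.ofReal (V y) ∂(P x)
      ≤ ENNReal.ofReal (V x + C.indicator (fun _ => b) x))
    (d' lam δ β b' : ℝ) (hd' : d ≤ d') (hd'1 : 1 ≤ d') (hlam : 0 < lam)
    (hδ : δ ∈ Set.Ico (0 : ℝ) 1) (hβ : β ∈ Set.Ioo (0 : ℝ) 1) (hb' : 0 ≤ b')
    (hlog : Real.log β < tameBound δ)
    (hsub : ∀ x, ∫⁻ y, ENNReal.ofReal (V y) ∂((kpow P (tamingF lam δ d' (V x))) x)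
      ≤ ENNReal.ofReal (β * V x + Set.indicator {x' | V x' ≤ d'} (fun _ => b') x))
    (Phat : ProbabilityTheory.Kernel 𝓧 𝓧) [ProbabilityTheory.IsMarkovKernel Phat]
    (hagree : ∀ x ∉ C, Phat x = P x)
    (bhat : ℝ) (hbhat : 0 ≤ bhat)
    (hweakhat : ∀ x, ∫⁻ y, ENNReal.ofReal (V y) ∂(Phat x)
      ≤ ENNReal.ofReal (V x + C.indicator (fun _ => bhat) x)) :
    ∀ βhat ∈ Set.Ioo β 1,
      (∃ dhat : ℝ, d' ≤ dhat ∧ ∃ bhat' : ℝ,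
        ∀ x, ∫⁻ y, ENNReal.ofReal (V y)
            ∂((kpow Phat (tamingF lam δ dhat (V x))) x)
          ≤ ENNReal.ofReal (βhat * V x
              + Set.indicator {x' | V x' ≤ dhat} (fun _ => bhat') x)) ∧
      ((∀ r : ℝ, IsSmallSet Phat {x | V x ≤ r}) → Real.log βhat < tameBound δ →
        IsTame Phat V) := by
  rintro βhat ⟨hββ, hβ1⟩
  have hWmeas : Measurable fun y => ENNReal.ofReal (V y) := hVmeas.ennreal_ofReal
  have hε : (0:ℝ) < βhat - β := sub_pos.mpr hββ
  have hδ1 : (0:ℝ) < 1 - δ := by linarith [hδ.2]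
  have hD1 : (1:ℝ) ≤ max d 1 := le_max_right d 1
  -- indicator bound
  have hind : ∀ x, C.indicator (fun _ => bhat) x ≤ bhat := by
    intro x
    by_cases h : x ∈ C
    · simp [Set.indicator_of_mem h]
    · simp [Set.indicator_of_notMem h, hbhat]
  have hdriftPhat : ∀ x, ∫⁻ y, ENNReal.ofReal (V y) ∂(Phat x) ≤ ENNReal.ofReal (V x + bhat) :=
    fun x => (hweakhat x).trans (ENNReal.ofReal_le_ofReal (by linarith [hind x]))
  -- Lemma A: iterated drift for Phat
  have hA : ∀ n : ℕ, ∀ x, ∫⁻ y, ENNReal.ofReal (V y) ∂(kpow Phat n x)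
      ≤ ENNReal.ofReal (V x + n * bhat) := by
    intro n
    induction n with
    | zero =>
      intro x
      rw [lintegral_kpow_zero Phat x hWmeas]
      exact ENNReal.ofReal_le_ofReal (by simp)
    | succ n ih =>
      intro x
      rw [lintegral_kpow_succ' Phat n x hWmeas]
      haveI := kpow_markov Phat n
      calc ∫⁻ z, (∫⁻ y, ENNReal.ofReal (V y) ∂(kpow Phat n z)) ∂(Phat x)
          ≤ ∫⁻ z, ENNReal.ofReal (V z + n * bhat) ∂(Phat x) := lintegral_mono fun z => ih z
        _ = ∫⁻ z, (ENNReal.ofReal (V z) + ENNReal.ofReal ((n : ℝ) * bhat)) ∂(Phat x) :=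
            lintegral_congr fun z =>
              ENNReal.ofReal_add (le_trans zero_le_one (hV1 z)) (by positivity)
        _ = (∫⁻ z, ENNReal.ofReal (V z) ∂(Phat x)) + ENNReal.ofReal ((n : ℝ) * bhat) := by
            rw [lintegral_add_right _ measurable_const, lintegral_const, measure_univ, mul_one]
        _ ≤ ENNReal.ofReal (V x + bhat) + ENNReal.ofReal ((n : ℝ) * bhat) :=
            add_le_add_left (hdriftPhat x) _
        _ = ENNReal.ofReal (V x + (n + 1 : ℕ) * bhat) := by
            rw [← ENNReal.ofReal_add (by nlinarith [hV1 x]) (by positivity)]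
            congr 1
            push_cast
            ring
  -- Lemma B: comparison of Phat and P iterates
  have hB : ∀ n : ℕ, ∀ x, ∫⁻ y, ENNReal.ofReal (V y) ∂(kpow Phat n x)
      ≤ (∫⁻ y, ENNReal.ofReal (V y) ∂(kpow P n x)) + ENNReal.ofReal (max d 1 + n * bhat) := by
    intro n
    induction n with
    | zero =>
      intro x
      rw [lintegral_kpow_zero Phat x hWmeas, lintegral_kpow_zero P x hWmeas]
      exact le_self_add
    | succ n ih =>
      intro x
      by_cases hxC : x ∈ C
      · have hVd : V x ≤ d := by rw [hCdef] at hxC; exact hxC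
        refine le_trans (hA (n+1) x) (le_trans (ENNReal.ofReal_le_ofReal ?_) le_add_self)
        exact add_le_add_left (hVd.trans (le_max_left d 1)) _
      · rw [lintegral_kpow_succ' Phat n x hWmeas, lintegral_kpow_succ' P n x hWmeas,
          hagree x hxC]
        haveI := kpow_markov P n
        haveI := kpow_markov Phat n
        calc ∫⁻ z, (∫⁻ y, ENNReal.ofReal (V y) ∂(kpow Phat n z)) ∂(P x)
            ≤ ∫⁻ z, ((∫⁻ y, ENNReal.ofReal (V y) ∂(kpow P n z))
                + ENNReal.ofReal (max d 1 + n * bhat)) ∂(P x) := lintegral_mono fun z => ih z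
          _ = (∫⁻ z, (∫⁻ y, ENNReal.ofReal (V y) ∂(kpow P n z)) ∂(P x))
                + ENNReal.ofReal (max d 1 + n * bhat) := by
              rw [lintegral_add_right _ measurable_const, lintegral_const, measure_univ, mul_one]
          _ ≤ _ := by
              refine add_le_add_right (ENNReal.ofReal_le_ofReal ?_) _
              have hcast : ((n : ℝ) + 1) * bhat = (n : ℝ) * bhat + bhat := by ring
              push_cast
              linarith
  -- the constants
  set d2 : ℝ := (2*lam*bhat/(βhat - β) + 1) ^ ((1:ℝ)/(1-δ)) with hd2_def
  set dhat : ℝ := max d' (max d2 (2*(max d 1 + 1 + bhat)/(βhat - β) + 1)) with hdhat_def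
  have hd'dhat : d' ≤ dhat := le_max_left _ _
  set bhat' : ℝ := (1 - βhat)*dhat + bhat with hbhat'_def
  -- key real inequality
  have hkey : ∀ v : ℝ, dhat < v →
      β*v + (max d 1 + (⌈lam * v ^ δ⌉₊ : ℝ) * bhat) ≤ βhat * v := by
    intro v hv
    have hv1 : (1:ℝ) ≤ v := le_trans hd'1 (le_trans hd'dhat hv.le)
    have hv0 : (0:ℝ) < v := lt_of_lt_of_le zero_lt_one hv1
    have hceil : (⌈lam * v ^ δ⌉₊ : ℝ) ≤ lam * v ^ δ + 1 := by
      have hnn : (0:ℝ) ≤ lam * v ^ δ := by positivity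
      exact (Nat.ceil_lt_add_one hnn).le
    have hbase : (0:ℝ) ≤ 2*lam*bhat/(βhat - β) + 1 := by positivity
    have hvd2 : d2 ≤ v :=
      le_trans (le_trans (le_max_left d2 _) (le_max_right d' _)) hv.le
    have hsplit : v ^ ((1:ℝ)-δ) * v ^ δ = v := by
      rw [← Real.rpow_add hv0, sub_add_cancel, Real.rpow_one]
    have hd2pow : d2 ^ ((1:ℝ)-δ) = 2*lam*bhat/(βhat - β) + 1 := by
      rw [hd2_def, ← Real.rpow_mul hbase, one_div, inv_mul_cancel₀ (ne_of_gt hδ1),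
        Real.rpow_one]
    have hpow : 2*lam*bhat/(βhat - β) ≤ v ^ ((1:ℝ)-δ) := by
      have h2 : d2 ^ ((1:ℝ)-δ) ≤ v ^ ((1:ℝ)-δ) :=
        Real.rpow_le_rpow (Real.rpow_nonneg hbase _) hvd2 hδ1.le
      rw [hd2pow] at h2
      linarith
    have hvδ : (0:ℝ) < v ^ δ := Real.rpow_pos_of_pos hv0 δ
    have claim1 : 2*(lam*bhat*(v ^ δ)) ≤ (βhat - β) * v := by
      have h1 := mul_le_mul_of_nonneg_right hpow hvδ.le
      rw [hsplit] at h1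
      have h2 := mul_le_mul_of_nonneg_left h1 hε.le
      calc 2*(lam*bhat*(v ^ δ)) = (βhat - β) * (2*lam*bhat/(βhat - β) * v ^ δ) := by
            field_simp
        _ ≤ (βhat - β) * v := h2
    have hv2 : 2*(max d 1 + 1 + bhat)/(βhat - β) + 1 ≤ v :=
      le_trans (le_trans (le_max_right d2 _) (le_max_right d' _)) hv.le
    have claim2 : 2*(max d 1 + 1 + bhat) + (βhat - β) ≤ (βhat - β) * v := by
      have heq : (βhat - β) * (2*(max d 1 + 1 + bhat)/(βhat - β) + 1)
          = 2*(max d 1 + 1 + bhat) + (βhat - β) := by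
        field_simp
      have := mul_le_mul_of_nonneg_left hv2 hε.le
      linarith
    have h3 : (⌈lam * v ^ δ⌉₊ : ℝ) * bhat ≤ lam*bhat*(v ^ δ) + bhat := by
      nlinarith [mul_le_mul_of_nonneg_right hceil hbhat]
    linarith
  -- the drift inequality for Phat with taming level dhat
  have hdrift : ∀ x, ∫⁻ y, ENNReal.ofReal (V y) ∂((kpow Phat (tamingF lam δ dhat (V x))) x)
      ≤ ENNReal.ofReal (βhat * V x + Set.indicator {x' | V x' ≤ dhat} (fun _ => bhat') x) := by
    intro x
    by_cases hx : V x ≤ dhat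
    · have hF1 : tamingF lam δ dhat (V x) = 1 := if_pos hx
      rw [hF1, kpow_one]
      have hmem : x ∈ {x' | V x' ≤ dhat} := hx
      rw [Set.indicator_of_mem hmem]
      refine (hweakhat x).trans (ENNReal.ofReal_le_ofReal ?_)
      have h1 : (0:ℝ) ≤ (1 - βhat) * (dhat - V x) :=
        mul_nonneg (by linarith) (by linarith)
      rw [hbhat'_def]
      nlinarith [hind x]
    · have hvd' : ¬ V x ≤ d' := fun h => hx (h.trans hd'dhat)
      have hFd : tamingF lam δ dhat (V x) = ⌈lam * V x ^ δ⌉₊ := if_neg hx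
      have hFd' : tamingF lam δ d' (V x) = ⌈lam * V x ^ δ⌉₊ := if_neg hvd'
      have hsubx := hsub x
      rw [hFd', Set.indicator_of_notMem (by exact hvd'), add_zero] at hsubx
      have hnmem : x ∉ {x' | V x' ≤ dhat} := hx
      rw [hFd, Set.indicator_of_notMem hnmem, add_zero]
      have hnn1 : (0:ℝ) ≤ β * V x := by nlinarith [hV1 x, hβ.1]
      have hnn2 : (0:ℝ) ≤ max d 1 + (⌈lam * V x ^ δ⌉₊ : ℝ) * bhat := by
        have := mul_nonneg (Nat.cast_nonneg (⌈lam * V x ^ δ⌉₊)) hbhat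
        linarith
      calc ∫⁻ y, ENNReal.ofReal (V y) ∂(kpow Phat (⌈lam * V x ^ δ⌉₊) x)
          ≤ (∫⁻ y, ENNReal.ofReal (V y) ∂(kpow P (⌈lam * V x ^ δ⌉₊) x))
              + ENNReal.ofReal (max d 1 + (⌈lam * V x ^ δ⌉₊ : ℝ) * bhat) := hB _ x
        _ ≤ ENNReal.ofReal (β * V x)
              + ENNReal.ofReal (max d 1 + (⌈lam * V x ^ δ⌉₊ : ℝ) * bhat) :=
            add_le_add_left hsubx _
        _ = ENNReal.ofReal (β * V x + (max d 1 + (⌈lam * V x ^ δ⌉₊ : ℝ) * bhat)) :=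
            (ENNReal.ofReal_add hnn1 hnn2).symm
        _ ≤ ENNReal.ofReal (βhat * V x) :=
            ENNReal.ofReal_le_ofReal (hkey (V x) (not_le.mp hx))
  refine ⟨⟨dhat, hd'dhat, bhat', hdrift⟩, ?_⟩
  intro hsmall hloghat
  exact ⟨dhat, le_trans hd'1 hd'dhat, hsmall dhat, lam, hlam, δ, hδ, βhat,
    ⟨lt_trans hβ.1 hββ, hβ1⟩, bhat', hloghat, hdrift⟩
end
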